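/- arXiv:2510.25343 — 3 statements merged into one kernel-verified Lean document; each statement's English description precedes it below -/
import Mathlib

section
/- Let (X, Y) be a pair of random variables with X taking values in a finite set 𝒳 and Y in a finite set 𝒴, let y be an element of 𝒴 with P(Y = y) > 0, and suppose H₂(X | Y = y) ≥ c for some real constant c. Let 𝒦 be a two-universal family of functions from 𝒳 to {0,1}^l, and let κ be uniformly distributed over 𝒦, independent of (X, Y). Then H(κ(X) | κ, Y = y) ≥ l − log₂(1 + 2^{l−c}) ≥ l − 2^{l−c}/ln 2, where H(κ(X) | κ, Y = y) denotes the conditional Shannon entropy of κ(X) given κ, computed under the conditional distribution given the event {Y = y}, with all entropies measured in bits (logarithm base 2). -/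
open scoped BigOperators Classical

noncomputable section

namespace OT

variable {Ω : Type*} [Fintype Ω]

/-- Probability of an event under a pmf on a finite sample space. -/
def pr (μ : Ω → ℝ) (s : Set Ω) : ℝ := ∑ ω, s.indicator μ ω

/-- `q` is a probability mass function on a finite type. -/
def isDist {α : Type*} [Fintype α] (q : α → ℝ) : Prop := (∀ a, 0 ≤ q a) ∧ ∑ a, q a = 1

/-- Distribution (pmf) of a random variable. -/
def dst {α : Type*} (μ : Ω → ℝ) (X : Ω → α) : α → ℝ := fun a => pr μ {ω | X ω = a}

/-- Joint distribution of two random variables. -/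
def jd {α β : Type*} (μ : Ω → ℝ) (X : Ω → α) (Y : Ω → β) : α × β → ℝ :=
  fun q => pr μ {ω | X ω = q.1 ∧ Y ω = q.2}

/-- Conditional pmf given an event. -/
def cnd (μ : Ω → ℝ) (s : Set Ω) : Ω → ℝ := fun ω => s.indicator μ ω / pr μ s

/-- Shannon entropy (in bits) of a pmf on a finite type. -/
def entD {α : Type*} [Fintype α] (q : α → ℝ) : ℝ := ∑ a, -(q a * Real.logb 2 (q a))

/-- Shannon entropy (in bits) of a random variable. -/
def ent {α : Type*} [Fintype α] (μ : Ω → ℝ) (X : Ω → α) : ℝ := entD (dst μ X)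

/-- Conditional Shannon entropy `H(X|Y)` (in bits). -/
def condEnt {α β : Type*} [Fintype α] [Fintype β] (μ : Ω → ℝ) (X : Ω → α) (Y : Ω → β) : ℝ :=
  ent μ (fun ω => (X ω, Y ω)) - ent μ Y

/-- Mutual information `I(X;Y)` (in bits). -/
def mi {α β : Type*} [Fintype α] [Fintype β] (μ : Ω → ℝ) (X : Ω → α) (Y : Ω → β) : ℝ :=
  ent μ X + ent μ Y - ent μ (fun ω => (X ω, Y ω))

/-- Conditional mutual information `I(X;Y|Z)` (in bits). -/
def cmi {α β γ : Type*} [Fintype α] [Fintype β] [Fintype γ]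
    (μ : Ω → ℝ) (X : Ω → α) (Y : Ω → β) (Z : Ω → γ) : ℝ :=
  ent μ (fun ω => (X ω, Z ω)) + ent μ (fun ω => (Y ω, Z ω))
    - ent μ (fun ω => (X ω, Y ω, Z ω)) - ent μ Z

/-- Rényi entropy of order two (in bits). -/
def ren2 {α : Type*} [Fintype α] (μ : Ω → ℝ) (X : Ω → α) : ℝ :=
  Real.logb 2 (1 / ∑ a, (dst μ X a) ^ 2)

/-- Statistical (total variation) distance between two pmfs. -/
def sd {α : Type*} [Fintype α] (q q' : α → ℝ) : ℝ := (∑ a, |q a - q' a|) / 2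

/-- Conditional min-entropy `H∞(X|Y)` of a joint pmf (in bits):
the minimum over `(a,b)` in the support of `log₂ (P(Y=b) / P(X=a, Y=b))`. -/
def minEnt {α β : Type*} [Fintype α] [Fintype β] (q : α × β → ℝ) : ℝ :=
  sInf {r | ∃ a b, 0 < q (a, b) ∧ r = Real.logb 2 ((∑ a', q (a', b)) / q (a, b))}

/-- `ε`-smooth conditional min-entropy of a joint pmf (in bits). -/
def sminEnt {α β : Type*} [Fintype α] [Fintype β] (q : α × β → ℝ) (ε : ℝ) : ℝ :=
  sSup {r | ∃ q' : α × β → ℝ, isDist q' ∧ sd q q' ≤ ε ∧ r = minEnt q'}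

/-- Conditional zero-entropy `H₀(X|Y)` of a joint pmf (in bits). -/
def zeroEnt {α β : Type*} [Fintype α] [Fintype β] (q : α × β → ℝ) : ℝ :=
  sSup {r | ∃ b, 0 < ∑ a, q (a, b) ∧
    r = Real.logb 2 ((Finset.univ.filter fun a => 0 < q (a, b)).card)}

end OT

open OT
section Aux

variable {Ω : Type*} [Fintype Ω]

lemma pr_setOf (μ : Ω → ℝ) (P : Ω → Prop) :
    pr μ {ω | P ω} = ∑ ω, if P ω then μ ω else 0 := by
  unfold pr
  refine Finset.sum_congr rfl fun ω _ => ?_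
  simp [Set.indicator_apply, Set.mem_setOf_eq]

lemma dst_apply (μ : Ω → ℝ) {α : Type*} (X : Ω → α) (a : α) :
    dst μ X a = ∑ ω, if X ω = a then μ ω else 0 := pr_setOf μ _

lemma dst_nonneg (μ : Ω → ℝ) (hμ : ∀ ω, 0 ≤ μ ω) {α : Type*} (X : Ω → α) (a : α) :
    0 ≤ dst μ X a := by
  rw [dst_apply]
  refine Finset.sum_nonneg fun ω _ => ?_
  split_ifs <;> simp [hμ]

lemma dst_sum_eq_one (μ : Ω → ℝ) (h : ∑ ω, μ ω = 1) {α : Type*} [Fintype α] (X : Ω → α) :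
    ∑ a, dst μ X a = 1 := by
  simp_rw [dst_apply]
  rw [Finset.sum_comm]
  simp_rw [Finset.sum_ite_eq Finset.univ, Finset.mem_univ, if_true]
  exact h

lemma dst_comp (μ : Ω → ℝ) {α β : Type*} [Fintype α] (X : Ω → α) (g : α → β) (b : β) :
    dst μ (fun ω => g (X ω)) b = ∑ x, if g x = b then dst μ X x else 0 := by
  simp_rw [dst_apply]
  calc (∑ ω, if g (X ω) = b then μ ω else 0)
      = ∑ ω, ∑ x, if X ω = x then (if g x = b then μ ω else 0) else 0 := by
        refine Finset.sum_congr rfl fun ω _ => ?_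
        simp [Finset.sum_ite_eq]
    _ = ∑ x, ∑ ω, if X ω = x then (if g x = b then μ ω else 0) else 0 := Finset.sum_comm
    _ = ∑ x, if g x = b then ∑ ω, if X ω = x then μ ω else 0 else 0 := by
        refine Finset.sum_congr rfl fun x _ => ?_
        split_ifs with h <;> simp

lemma jensen_log {ι : Type*} [Fintype ι] (w a : ι → ℝ)
    (hw : ∀ i, 0 ≤ w i) (hw1 : ∑ i, w i = 1)
    (ha : ∀ i, 0 < w i → 0 < a i)
    (S : ℝ) (hS : S = ∑ i, w i * a i) (hSpos : 0 < S) :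
    ∑ i, w i * Real.log (a i) ≤ Real.log S := by
  have key : ∀ i, w i * Real.log (a i) ≤ w i * Real.log S + (w i * a i - w i * S) / S := by
    intro i
    rcases eq_or_lt_of_le (hw i) with h | h
    · simp [← h]
    · have hai := ha i h
      have hdiv : Real.log (a i) - Real.log S ≤ a i / S - 1 := by
        have h2 := Real.log_le_sub_one_of_pos (show 0 < a i / S by positivity)
        rwa [Real.log_div (ne_of_gt hai) (ne_of_gt hSpos)] at h2
      have h3 := mul_le_mul_of_nonneg_left hdiv (le_of_lt h)
      have h4 : w i * (a i / S - 1) = (w i * a i - w i * S) / S := by field_simp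
      nlinarith [h3, h4]
  calc ∑ i, w i * Real.log (a i)
      ≤ ∑ i, (w i * Real.log S + (w i * a i - w i * S) / S) :=
        Finset.sum_le_sum fun i _ => key i
    _ = (∑ i, w i) * Real.log S + ((∑ i, w i * a i) - (∑ i, w i) * S) / S := by
        rw [Finset.sum_add_distrib, ← Finset.sum_mul, ← Finset.sum_div,
          Finset.sum_sub_distrib, ← Finset.sum_mul]
    _ = Real.log S := by rw [hw1, ← hS]; field_simp; ring

end Aux
lemma neg_mul_logb_div {a n : ℝ} (ha : 0 ≤ a) (hn : 0 < n) :
    -((a / n) * Real.logb 2 (a / n)) = (a / n) * (-Real.logb 2 a) + (a / n) * Real.logb 2 n := by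
  rcases eq_or_lt_of_le ha with h | h
  · simp [← h]
  · rw [Real.logb_div (ne_of_gt h) (ne_of_gt hn)]; ring
/-- Bennett et al.: if `H₂(X | Y = y) ≥ c` and `κ` is drawn uniformly from a
two-universal family of hash functions `𝒳 → {0,1}^l`, independently of `(X,Y)`, then
`H(κ(X) | κ, Y = y) ≥ l − log₂(1 + 2^(l−c)) ≥ l − 2^(l−c)/ln 2`.
Independence and uniformity of `κ` are modelled by the product of the conditional
measure given `{Y = y}` with the uniform distribution on the (finite) family `K`. -/
theorem statement2 {Ω 𝒳 𝒴 K : Type*} [Fintype Ω] [Fintype 𝒳] [Fintype 𝒴] [Fintype K]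
    [Nonempty K]
    (μ : Ω → ℝ) (hμ : isDist μ) (X : Ω → 𝒳) (Y : Ω → 𝒴) (l : ℕ)
    (f : K → 𝒳 → (Fin l → Bool))
    (huniv : ∀ x x' : 𝒳, x ≠ x' →
      ((Finset.univ.filter fun k : K => f k x = f k x').card : ℝ) / Fintype.card K
        ≤ 2 ^ (-(l : ℝ)))
    (y : 𝒴) (hy : 0 < dst μ Y y) (c : ℝ)
    (hc : c ≤ ren2 (cnd μ {ω | Y ω = y}) X) :
    (l : ℝ) - Real.logb 2 (1 + 2 ^ ((l : ℝ) - c)) ≤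
      condEnt (fun p : Ω × K => cnd μ {ω | Y ω = y} p.1 / Fintype.card K)
        (fun p => f p.2 (X p.1)) (fun p => p.2)
    ∧ (l : ℝ) - 2 ^ ((l : ℝ) - c) / Real.log 2 ≤
        (l : ℝ) - Real.logb 2 (1 + 2 ^ ((l : ℝ) - c)) := by
  classical
  obtain ⟨hμ0, hμ1⟩ := hμ
  set ν : Ω → ℝ := cnd μ {ω | Y ω = y} with hνdef
  set nK : ℝ := (Fintype.card K : ℝ) with hnKdef
  have hnK : 0 < nK := by
    rw [hnKdef]; exact_mod_cast Fintype.card_pos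
  have hprY : 0 < pr μ {ω | Y ω = y} := hy
  have hν0 : ∀ ω, 0 ≤ ν ω := by
    intro ω; rw [hνdef]; unfold cnd
    exact div_nonneg (Set.indicator_nonneg (fun ω _ => hμ0 ω) ω) hprY.le
  have hν1 : ∑ ω, ν ω = 1 := by
    rw [hνdef]; unfold cnd
    rw [← Finset.sum_div]
    exact div_self (ne_of_gt hprY)
  set q : 𝒳 → ℝ := dst ν X with hqdef
  have hq0 : ∀ x, 0 ≤ q x := fun x => dst_nonneg ν hν0 X x
  have hq1 : ∑ x, q x = 1 := dst_sum_eq_one ν hν1 X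
  set p : K → (Fin l → Bool) → ℝ := fun k z => dst ν (fun ω => f k (X ω)) z with hpdef
  have hp0 : ∀ k z, 0 ≤ p k z := fun k z => dst_nonneg ν hν0 _ z
  have hp1 : ∀ k, ∑ z, p k z = 1 := fun k => dst_sum_eq_one ν hν1 _
  have hpω : ∀ k z, p k z = ∑ ω, if f k (X ω) = z then ν ω else 0 :=
    fun k z => (dst_apply ν (fun ω => f k (X ω)) z).trans
      (Finset.sum_congr rfl fun ω _ => by split_ifs <;> rfl)
  have hpq : ∀ k z, p k z = ∑ x, if f k x = z then q x else 0 :=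
    fun k z => (dst_comp ν X (f k) z).trans
      (Finset.sum_congr rfl fun x _ => by split_ifs <;> rfl)
  set μ' : Ω × K → ℝ := fun p : Ω × K => ν p.1 / nK with hμ'def
  -- distribution of second marginal
  have hdstK : ∀ k : K, dst μ' (fun p : Ω × K => p.2) k = 1 / nK := by
    intro k
    rw [dst_apply, Fintype.sum_prod_type]
    simp only [hμ'def]
    simp_rw [Finset.sum_ite_eq' Finset.univ, Finset.mem_univ, if_true]
    rw [← Finset.sum_div, hν1]
  have hdstZK : ∀ (z : Fin l → Bool) (k : K),
      dst μ' (fun p : Ω × K => (f p.2 (X p.1), p.2)) (z, k) = p k z / nK := by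
    intro z k
    rw [dst_apply, Fintype.sum_prod_type]
    simp only [hμ'def, Prod.mk.injEq]
    have inner : ∀ ω, (∑ k' : K, if f k' (X ω) = z ∧ k' = k then ν ω / nK else 0)
        = if f k (X ω) = z then ν ω / nK else 0 := by
      intro ω
      rw [Finset.sum_eq_single k]
      · simp
      · intro b _ hb; simp [hb]
      · simp
    simp_rw [inner]
    have push : ∀ ω, (if f k (X ω) = z then ν ω / nK else 0)
        = (if f k (X ω) = z then ν ω else 0) / nK := by
      intro ω; split_ifs <;> simp
    simp_rw [push]
    rw [← Finset.sum_div, ← hpω]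
  have hentK : ent μ' (fun p : Ω × K => p.2) = Real.logb 2 nK := by
    unfold ent entD
    simp_rw [hdstK]
    rw [Finset.sum_const, Finset.card_univ, nsmul_eq_mul, ← hnKdef]
    rw [one_div, Real.logb_inv]
    field_simp
  have hsum1 : ∑ z : Fin l → Bool, ∑ k : K, p k z / nK = 1 := by
    rw [Finset.sum_comm]
    have e : ∀ k : K, ∑ z, p k z / nK = 1 / nK := fun k => by
      rw [← Finset.sum_div, hp1]
    simp_rw [e]
    rw [Finset.sum_const, Finset.card_univ, nsmul_eq_mul, ← hnKdef]
    field_simp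
  set E : ℝ := ∑ z : Fin l → Bool, ∑ k : K, (p k z / nK) * (-Real.logb 2 (p k z)) with hEdef
  have hentZK : ent μ' (fun p : Ω × K => (f p.2 (X p.1), p.2)) = E + Real.logb 2 nK := by
    unfold ent entD
    rw [Fintype.sum_prod_type]
    simp_rw [hdstZK]
    simp_rw [neg_mul_logb_div (hp0 _ _) hnK]
    rw [hEdef]
    simp_rw [Finset.sum_add_distrib]
    congr 1
    have e : ∀ z : Fin l → Bool, ∑ k : K, (p k z / nK) * Real.logb 2 nK
        = (∑ k : K, p k z / nK) * Real.logb 2 nK := fun z => (Finset.sum_mul _ _ _).symm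
    simp_rw [e]
    rw [← Finset.sum_mul, hsum1, one_mul]
  have hcond : condEnt μ' (fun p : Ω × K => f p.2 (X p.1)) (fun p : Ω × K => p.2) = E := by
    unfold condEnt
    rw [hentZK, hentK]; ring
  -- collision sum
  set S : ℝ := ∑ z : Fin l → Bool, ∑ k : K, (p k z / nK) * p k z with hSdef
  have hterm_nonneg : ∀ (z : Fin l → Bool) (k : K), 0 ≤ (p k z / nK) * p k z := by
    intro z k
    exact mul_nonneg (div_nonneg (hp0 k z) hnK.le) (hp0 k z)
  have hSpos : 0 < S := by
    obtain ⟨k₀⟩ := ‹Nonempty K›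
    have hex : ∃ z, 0 < p k₀ z := by
      by_contra h; push_neg at h
      have h2 : ∑ z, p k₀ z ≤ 0 := Finset.sum_nonpos fun z _ => h z
      linarith [hp1 k₀]
    obtain ⟨z₀, hz₀⟩ := hex
    calc (0:ℝ) < (p k₀ z₀ / nK) * p k₀ z₀ := by positivity
      _ ≤ ∑ k, (p k z₀ / nK) * p k z₀ :=
          Finset.single_le_sum (fun k _ => hterm_nonneg z₀ k) (Finset.mem_univ k₀)
      _ ≤ S := Finset.single_le_sum
          (fun z _ => Finset.sum_nonneg fun k _ => hterm_nonneg z k) (Finset.mem_univ z₀)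
  -- Jensen
  have hlog2 : (0:ℝ) < Real.log 2 := Real.log_pos one_lt_two
  have hE : -Real.logb 2 S ≤ E := by
    have hw1 : ∑ i : (Fin l → Bool) × K, p i.2 i.1 / nK = 1 := by
      rw [Fintype.sum_prod_type]; exact hsum1
    have hj := jensen_log (fun i : (Fin l → Bool) × K => p i.2 i.1 / nK)
      (fun i => p i.2 i.1)
      (fun i => div_nonneg (hp0 _ _) hnK.le) hw1
      (fun i hi => by
        by_contra hle; push_neg at hle
        have h2 : p i.2 i.1 / nK ≤ 0 := div_nonpos_of_nonpos_of_nonneg hle hnK.le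
        linarith)
      S (by rw [hSdef, Fintype.sum_prod_type]) hSpos
    simp only [Fintype.sum_prod_type] at hj
    -- hj : ∑ z, ∑ k, (p k z / nK) * Real.log (p k z) ≤ Real.log S
    have h2 : ∑ z : Fin l → Bool, ∑ k : K, (p k z / nK) * Real.logb 2 (p k z)
        ≤ Real.logb 2 S := by
      simp only [Real.logb]
      have e : ∀ (z : Fin l → Bool) (k : K),
          (p k z / nK) * (Real.log (p k z) / Real.log 2)
            = ((p k z / nK) * Real.log (p k z)) / Real.log 2 := fun z k => by ring
      simp_rw [e, ← Finset.sum_div]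
      exact (div_le_div_iff_of_pos_right hlog2).mpr hj
    have e2 : E = -∑ z : Fin l → Bool, ∑ k : K, (p k z / nK) * Real.logb 2 (p k z) := by
      rw [hEdef]; simp_rw [mul_neg, Finset.sum_neg_distrib]
    rw [e2]
    linarith
  -- rewrite S as a sum over pairs x, x'
  have hA : ∀ k : K, ∑ z : Fin l → Bool, (p k z) * (p k z)
      = ∑ x : 𝒳, ∑ x' : 𝒳, if f k x = f k x' then q x * q x' else 0 := by
    intro k
    simp_rw [hpq, Finset.sum_mul_sum]
    rw [Finset.sum_comm]
    refine Finset.sum_congr rfl fun x _ => ?_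
    rw [Finset.sum_comm]
    refine Finset.sum_congr rfl fun x' _ => ?_
    rw [Finset.sum_eq_single (f k x)]
    · by_cases h : f k x = f k x'
      · simp [h]
      · have h' : ¬ (f k x' = f k x) := fun hh => h hh.symm
        simp [h, h']
    · intro z _ hz
      rw [if_neg (fun hh => hz hh.symm), zero_mul]
    · simp
  have hScard : S = ∑ x : 𝒳, ∑ x' : 𝒳, (q x * q x')
      * (((Finset.univ.filter fun k : K => f k x = f k x').card : ℝ) / nK) := by
    have h1 : S = (∑ k : K, ∑ z : Fin l → Bool, (p k z) * (p k z)) / nK := by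
      rw [hSdef, Finset.sum_comm, Finset.sum_div]
      refine Finset.sum_congr rfl fun k _ => ?_
      rw [Finset.sum_div]
      exact Finset.sum_congr rfl fun z _ => div_mul_eq_mul_div _ _ _
    rw [h1]
    simp_rw [hA]
    rw [Finset.sum_comm, Finset.sum_div]
    refine Finset.sum_congr rfl fun x _ => ?_
    rw [Finset.sum_comm, Finset.sum_div]
    refine Finset.sum_congr rfl fun x' _ => ?_
    have e : ∀ k : K, (if f k x = f k x' then q x * q x' else 0)
        = (q x * q x') * (if f k x = f k x' then (1:ℝ) else 0) := by
      intro k; split_ifs <;> ring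
    simp_rw [e]
    rw [← Finset.mul_sum, Finset.sum_boole, mul_div_assoc]
  -- collision probability bound
  have hTpos : 0 < ∑ x, q x ^ 2 := by
    have hex : ∃ x, 0 < q x := by
      by_contra h; push_neg at h
      have h2 : ∑ x, q x ≤ 0 := Finset.sum_nonpos fun x _ => h x
      linarith
    obtain ⟨x₀, hx₀⟩ := hex
    calc (0:ℝ) < q x₀ ^ 2 := by positivity
      _ ≤ ∑ x, q x ^ 2 := Finset.single_le_sum (f := fun x => q x ^ 2)
          (fun x _ => sq_nonneg _) (Finset.mem_univ x₀)
  have hT : ∑ x, q x ^ 2 ≤ 2 ^ (-c) := by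
    unfold ren2 at hc
    rw [← hqdef] at hc
    have h1 : (2:ℝ) ^ c ≤ 1 / ∑ x, q x ^ 2 := by
      calc (2:ℝ) ^ c ≤ 2 ^ Real.logb 2 (1 / ∑ x, q x ^ 2) :=
            Real.rpow_le_rpow_of_exponent_le one_le_two hc
        _ = 1 / ∑ x, q x ^ 2 := Real.rpow_logb two_pos (by norm_num) (by positivity)
    have h2 : (0:ℝ) < (2:ℝ) ^ c := Real.rpow_pos_of_pos two_pos c
    rw [Real.rpow_neg (by norm_num : (0:ℝ) ≤ 2), inv_eq_one_div, le_div_iff₀ h2]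
    have h3 := mul_le_mul_of_nonneg_left h1 hTpos.le
    rwa [mul_one_div, div_self hTpos.ne'] at h3
  -- bound S
  have hSbound : S ≤ 2 ^ (-c) + 2 ^ (-(l:ℝ)) := by
    rw [hScard]
    have hsplit : ∀ x : 𝒳, ∑ x' : 𝒳, (q x * q x')
          * (((Finset.univ.filter fun k : K => f k x = f k x').card : ℝ) / nK)
        = (q x * q x) * (((Finset.univ.filter fun k : K => f k x = f k x).card : ℝ) / nK)
          + ∑ x' ∈ Finset.univ.erase x, (q x * q x')
            * (((Finset.univ.filter fun k : K => f k x = f k x').card : ℝ) / nK) := by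
      intro x
      rw [← Finset.add_sum_erase _ _ (Finset.mem_univ x)]
    simp_rw [hsplit]
    rw [Finset.sum_add_distrib]
    have hdiag : ∑ x : 𝒳, (q x * q x)
        * (((Finset.univ.filter fun k : K => f k x = f k x).card : ℝ) / nK) ≤ 2 ^ (-c) := by
      have efil : ∀ x : 𝒳, (Finset.univ.filter fun k : K => f k x = f k x) =
          (Finset.univ : Finset K) := by
        intro x; apply Finset.filter_true_of_mem; intro k _; rfl
      calc ∑ x : 𝒳, (q x * q x)
            * (((Finset.univ.filter fun k : K => f k x = f k x).card : ℝ) / nK)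
          = ∑ x : 𝒳, q x ^ 2 := by
            refine Finset.sum_congr rfl fun x _ => ?_
            rw [efil, Finset.card_univ, ← hnKdef, div_self hnK.ne', mul_one, sq]
        _ ≤ 2 ^ (-c) := hT
    have hoff : ∑ x : 𝒳, ∑ x' ∈ Finset.univ.erase x, (q x * q x')
        * (((Finset.univ.filter fun k : K => f k x = f k x').card : ℝ) / nK)
          ≤ 2 ^ (-(l:ℝ)) := by
      have step1 : ∀ x : 𝒳, ∑ x' ∈ Finset.univ.erase x, (q x * q x')
            * (((Finset.univ.filter fun k : K => f k x = f k x').card : ℝ) / nK)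
          ≤ ∑ x' : 𝒳, (q x * q x') * 2 ^ (-(l:ℝ)) := by
        intro x
        calc ∑ x' ∈ Finset.univ.erase x, (q x * q x')
              * (((Finset.univ.filter fun k : K => f k x = f k x').card : ℝ) / nK)
            ≤ ∑ x' ∈ Finset.univ.erase x, (q x * q x') * 2 ^ (-(l:ℝ)) := by
              refine Finset.sum_le_sum fun x' hx' => ?_
              have hne : x ≠ x' := (Finset.ne_of_mem_erase hx').symm
              exact mul_le_mul_of_nonneg_left (huniv x x' hne)
                (mul_nonneg (hq0 x) (hq0 x'))
          _ ≤ ∑ x' : 𝒳, (q x * q x') * 2 ^ (-(l:ℝ)) := by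
              refine Finset.sum_le_sum_of_subset_of_nonneg (Finset.subset_univ _)
                fun x' _ _ => ?_
              have : (0:ℝ) < 2 ^ (-(l:ℝ)) := Real.rpow_pos_of_pos two_pos _
              exact mul_nonneg (mul_nonneg (hq0 x) (hq0 x')) this.le
      calc ∑ x : 𝒳, ∑ x' ∈ Finset.univ.erase x, (q x * q x')
            * (((Finset.univ.filter fun k : K => f k x = f k x').card : ℝ) / nK)
          ≤ ∑ x : 𝒳, ∑ x' : 𝒳, (q x * q x') * 2 ^ (-(l:ℝ)) :=
            Finset.sum_le_sum fun x _ => step1 x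
        _ = 2 ^ (-(l:ℝ)) := by
            have e : ∀ x : 𝒳, ∑ x' : 𝒳, (q x * q x') * 2 ^ (-(l:ℝ))
                = q x * 2 ^ (-(l:ℝ)) := by
              intro x
              simp_rw [mul_assoc, ← Finset.mul_sum, ← Finset.sum_mul, hq1, one_mul]
            simp_rw [e]
            rw [← Finset.sum_mul, hq1, one_mul]
    linarith
  -- conclude
  have hident : Real.logb 2 (2 ^ (-c) + 2 ^ (-(l:ℝ)))
      = -(l:ℝ) + Real.logb 2 (1 + 2 ^ ((l:ℝ) - c)) := by
    have e : (2:ℝ) ^ (-c) + 2 ^ (-(l:ℝ)) = 2 ^ (-(l:ℝ)) * (1 + 2 ^ ((l:ℝ) - c)) := by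
      rw [mul_add, mul_one, ← Real.rpow_add two_pos]
      ring_nf
    rw [e, Real.logb_mul (by positivity) (by positivity), Real.logb_rpow two_pos one_lt_two.ne']
  have hBpos : (0:ℝ) < 2 ^ (-c) + 2 ^ (-(l:ℝ)) := by positivity
  have hmono : Real.logb 2 S ≤ Real.logb 2 (2 ^ (-c) + 2 ^ (-(l:ℝ))) :=
    Real.logb_le_logb_of_le one_lt_two hSpos hSbound
  constructor
  · rw [hcond]
    have := hident ▸ hmono
    linarith [hE]
  · have ht : (0:ℝ) < 2 ^ ((l:ℝ) - c) := Real.rpow_pos_of_pos two_pos _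
    have hlb : Real.logb 2 (1 + 2 ^ ((l:ℝ) - c)) ≤ 2 ^ ((l:ℝ) - c) / Real.log 2 := by
      have h1 := Real.log_le_sub_one_of_pos (show (0:ℝ) < 1 + 2 ^ ((l:ℝ) - c) by linarith)
      simp only [Real.logb]
      exact (div_le_div_iff_of_pos_right hlog2).mpr (by linarith)
    linarith
end
end

section
/- Let (X₁, Y₁), …, (Xₙ, Yₙ) be i.i.d. pairs of random variables, each distributed according to a fixed joint distribution P_{XY} on a finite set 𝒳 × 𝒴, and write Xⁿ = (X₁,…,Xₙ), Yⁿ = (Y₁,…,Yₙ). For any ε > 0: H^ε_∞(Xⁿ | Yⁿ) ≥ n·H(X|Y) − 4·√(n · log₂(1/ε)) · log₂|𝒳|, where H(X|Y) is the conditional Shannon entropy (in bits) of a single pair. -/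
open scoped BigOperators Classical

noncomputable section

open OT Finset

section Aux

variable {A B : Type*} [Fintype A] [Fintype B]

/-- quadratic upper bound for `exp (-x)`, `x ≥ 0`. -/
lemma exp_neg_le_quad {x : ℝ} (hx : 0 ≤ x) : Real.exp (-x) ≤ 1 - x + x ^ 2 / 2 := by
  have hd : ∀ t : ℝ, HasDerivAt (fun u : ℝ => Real.exp (-u) - (1 - u + u ^ 2 / 2))
      (-Real.exp (-t) - (-1 + t)) t := by
    intro t
    have h1 : HasDerivAt (fun u : ℝ => -u) (-1 : ℝ) t := (hasDerivAt_id t).neg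
    have h2 : HasDerivAt (fun u : ℝ => Real.exp (-u)) (Real.exp (-t) * (-1)) t :=
      (Real.hasDerivAt_exp (-t)).comp t h1
    have h3 : HasDerivAt (fun u : ℝ => u ^ 2 / 2) ((2 : ℕ) * t ^ 1 / 2) t :=
      (hasDerivAt_pow 2 t).div_const 2
    have h4 : HasDerivAt (fun u : ℝ => 1 - u + u ^ 2 / 2) (0 - 1 + (2 : ℕ) * t ^ 1 / 2) t :=
      ((hasDerivAt_const t (1 : ℝ)).sub (hasDerivAt_id t)).add h3
    have : HasDerivAt (fun u : ℝ => Real.exp (-u) - (1 - u + u ^ 2 / 2)) _ t := h2.sub h4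
    convert this using 1
    push_cast
    ring
  have hantit : AntitoneOn (fun u : ℝ => Real.exp (-u) - (1 - u + u ^ 2 / 2)) (Set.Ici 0) := by
    apply antitoneOn_of_deriv_nonpos (convex_Ici 0)
    · exact fun t _ => ((hd t).continuousAt).continuousWithinAt
    · intro t _
      exact (hd t).differentiableAt.differentiableWithinAt
    · intro t _
      rw [(hd t).deriv]
      have := Real.add_one_le_exp (-t)
      linarith
  have h0 : (fun u : ℝ => Real.exp (-u) - (1 - u + u ^ 2 / 2)) x ≤
      (fun u : ℝ => Real.exp (-u) - (1 - u + u ^ 2 / 2)) 0 :=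
    hantit Set.self_mem_Ici (Set.mem_Ici.mpr hx) hx
  simp only [neg_zero, Real.exp_zero] at h0
  norm_num at h0
  linarith

/-- pointwise bound for `t * (log t)^2`. -/
lemma logsq_pointwise {t m : ℝ} (h0 : 0 ≤ t) (h1 : t ≤ 1) (hm : 2 ≤ m) :
    t * Real.log t ^ 2 ≤ 9 * Real.log m ^ 2 * t + 9 * Real.log m ^ 2 / m ^ 3 := by
  have hmpos : (0 : ℝ) < m := by linarith
  have hlogm : 0 < Real.log m := Real.log_pos (by linarith)
  rcases eq_or_lt_of_le h0 with h | htpos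
  · rw [← h]
    have : (0:ℝ) ≤ 9 * Real.log m ^ 2 / m ^ 3 := by positivity
    nlinarith
  rcases le_or_gt (m ^ 3)⁻¹ t with hbig | hsmall
  · -- t ≥ m⁻³ : |log t| ≤ 3 log m
    have hlt : Real.log t ≤ 0 := Real.log_nonpos h0 h1
    have hge : -(3 * Real.log m) ≤ Real.log t := by
      have h' : Real.log ((m ^ 3)⁻¹) ≤ Real.log t := Real.log_le_log (by positivity) hbig
      rw [Real.log_inv, Real.log_pow] at h'
      push_cast at h'
      linarith
    have hsq : Real.log t ^ 2 ≤ (3 * Real.log m) ^ 2 := sq_le_sq' hge (by nlinarith)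
    have h2 : t * Real.log t ^ 2 ≤ t * (3 * Real.log m) ^ 2 :=
      mul_le_mul_of_nonneg_left hsq h0
    have h3 : (0:ℝ) ≤ 9 * Real.log m ^ 2 / m ^ 3 := by positivity
    nlinarith
  · -- t < m⁻³ : monotonicity trick
    set c : ℝ := (m ^ 3)⁻¹ with hc
    have hcpos : 0 < c := by positivity
    have hLc : Real.log (1 / c) = 3 * Real.log m := by
      rw [one_div, inv_inv, Real.log_pow]; push_cast; ring
    have hLc2 : 2 ≤ Real.log (1 / c) := by
      rw [hLc]
      have h2 : Real.log 2 ≤ Real.log m := Real.log_le_log (by norm_num) hm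
      have := Real.log_two_gt_d9
      nlinarith
    have key : t * Real.log t ^ 2 ≤ c * Real.log (1 / c) ^ 2 := by
      set s : ℝ := t / c with hs
      have hspos : 0 < s := by positivity
      have hs1 : s < 1 := (div_lt_one hcpos).mpr hsmall
      have hts : t = c * s := by rw [hs]; field_simp
      have hLs : 0 < Real.log (1 / s) := Real.log_pos (by rw [one_div]; exact (one_lt_inv₀ hspos).mpr hs1)
      set Ls := Real.log (1 / s) with hLsdef
      set Lc := Real.log (1 / c) with hLcdef
      have hlogt : Real.log t = -(Lc + Ls) := by
        rw [hts, Real.log_mul (ne_of_gt hcpos) (ne_of_gt hspos), hLsdef, hLcdef,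
          Real.log_div one_ne_zero (ne_of_gt hspos), Real.log_div one_ne_zero (ne_of_gt hcpos),
          Real.log_one]
        ring
      have hsexp : s = Real.exp (-Ls) := by
        have hls' : Ls = -Real.log s := by rw [hLsdef, one_div, Real.log_inv]
        rw [hls', neg_neg, Real.exp_log hspos]
      have hexp : 1 + Ls / 2 ≤ Real.exp (Ls / 2) := by
        have := Real.add_one_le_exp (Ls / 2); linarith
      have hLcLs : Lc + Ls ≤ Lc * (1 + Ls / 2) := by nlinarith
      have hsq2 : (Lc + Ls) ^ 2 ≤ Lc ^ 2 * Real.exp (Ls / 2) ^ 2 := by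
        have a1 : 0 ≤ Lc + Ls := by linarith
        have a2 : Lc + Ls ≤ Lc * Real.exp (Ls / 2) :=
          le_trans hLcLs (mul_le_mul_of_nonneg_left hexp (by linarith))
        have := pow_le_pow_left₀ a1 a2 2
        rwa [mul_pow] at this
      have hexpLs : Real.exp (Ls / 2) ^ 2 = Real.exp Ls := by
        rw [sq, ← Real.exp_add]; norm_num
      have hmain : Real.exp (-Ls) * (Lc + Ls) ^ 2 ≤ Lc ^ 2 := by
        have h5 : Real.exp (-Ls) * (Lc + Ls) ^ 2 ≤ Real.exp (-Ls) * (Lc ^ 2 * Real.exp Ls) := by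
          rw [← hexpLs]
          exact mul_le_mul_of_nonneg_left hsq2 (le_of_lt (Real.exp_pos _))
        have h6 : Real.exp (-Ls) * (Lc ^ 2 * Real.exp Ls) = Lc ^ 2 := by
          rw [Real.exp_neg]
          field_simp
        linarith
      calc t * Real.log t ^ 2 = c * (Real.exp (-Ls) * (Lc + Ls) ^ 2) := by
            rw [hlogt, hts, ← hsexp]; ring
        _ ≤ c * Lc ^ 2 := mul_le_mul_of_nonneg_left hmain (le_of_lt hcpos)
    have hrw : c * Real.log (1 / c) ^ 2 = 9 * Real.log m ^ 2 / m ^ 3 := by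
      rw [hLc, hc]
      field_simp
      ring
    have h3 : (0:ℝ) ≤ 9 * Real.log m ^ 2 * t := by positivity
    linarith [key, hrw ▸ key]

end Aux

section Aux2

variable {A B : Type*} [Fintype A] [Fintype B]

/-- second-moment bound for `∑ w log² w` over a distribution on at least two points. -/
lemma col_logsq (w : A → ℝ) (h0 : ∀ a, 0 ≤ w a) (h1 : ∑ a, w a = 1)
    (hm : 2 ≤ Fintype.card A) :
    ∑ a, w a * Real.log (w a) ^ 2 ≤ 11.25 * Real.log (Fintype.card A) ^ 2 := by
  have hm' : (2 : ℝ) ≤ (Fintype.card A : ℝ) := by exact_mod_cast hm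
  have hwle1 : ∀ a, w a ≤ 1 := by
    intro a
    rw [← h1]
    exact Finset.single_le_sum (fun a _ => h0 a) (mem_univ a)
  have hpt : ∀ a, w a * Real.log (w a) ^ 2 ≤
      9 * Real.log (Fintype.card A) ^ 2 * w a
        + 9 * Real.log (Fintype.card A) ^ 2 / (Fintype.card A : ℝ) ^ 3 :=
    fun a => logsq_pointwise (h0 a) (hwle1 a) hm'
  have hsum := Finset.sum_le_sum (fun a (_ : a ∈ univ) => hpt a)
  rw [Finset.sum_add_distrib, ← Finset.mul_sum, h1, Finset.sum_const, card_univ,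
    nsmul_eq_mul] at hsum
  have hcard : (0:ℝ) < (Fintype.card A : ℝ) := by linarith
  have hlog : (0:ℝ) ≤ Real.log (Fintype.card A) ^ 2 := sq_nonneg _
  have hkey : (Fintype.card A : ℝ) * (9 * Real.log (Fintype.card A) ^ 2 / (Fintype.card A : ℝ) ^ 3)
      ≤ 2.25 * Real.log (Fintype.card A) ^ 2 := by
    rw [mul_div_assoc']
    rw [div_le_iff₀ (by positivity)]
    have h4 : (4:ℝ) ≤ (Fintype.card A : ℝ) ^ 2 := by nlinarith
    nlinarith [mul_nonneg (mul_nonneg hlog (le_of_lt hcard))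
      (by nlinarith : (0:ℝ) ≤ 2.25 * (Fintype.card A : ℝ) ^ 2 - 9)]
  nlinarith

/-- Gibbs-type bound: conditional entropy column bound `∑ f log (S/f) ≤ S log m`. -/
lemma col_gibbs (f : A → ℝ) (h0 : ∀ a, 0 ≤ f a) (hA : 1 ≤ Fintype.card A) :
    ∑ a, f a * Real.log ((∑ a', f a') / f a) ≤ (∑ a', f a') * Real.log (Fintype.card A) := by
  set S := ∑ a', f a' with hS
  have hS0 : 0 ≤ S := Finset.sum_nonneg (fun a _ => h0 a)
  have hcard : (1:ℝ) ≤ (Fintype.card A : ℝ) := by exact_mod_cast hA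
  have hcardpos : (0:ℝ) < (Fintype.card A : ℝ) := by linarith
  have hpt : ∀ a, f a * Real.log (S / f a) ≤
      S / (Fintype.card A : ℝ) - f a + f a * Real.log (Fintype.card A) := by
    intro a
    rcases eq_or_lt_of_le (h0 a) with h | hfa
    · rw [← h]
      have : (0:ℝ) ≤ S / (Fintype.card A : ℝ) := by positivity
      simp
      linarith
    · have hSf : f a ≤ S := Finset.single_le_sum (fun a _ => h0 a) (mem_univ a)
      have hSpos : 0 < S := lt_of_lt_of_le hfa hSf
      have hsplit : Real.log (S / f a) =
          Real.log (S / ((Fintype.card A : ℝ) * f a)) + Real.log (Fintype.card A) := by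
        rw [← Real.log_mul (by positivity) (by positivity)]
        congr 1
        field_simp
      have hgib : Real.log (S / ((Fintype.card A : ℝ) * f a)) ≤
          S / ((Fintype.card A : ℝ) * f a) - 1 :=
        Real.log_le_sub_one_of_pos (by positivity)
      have : f a * Real.log (S / f a) ≤
          f a * (S / ((Fintype.card A : ℝ) * f a) - 1) + f a * Real.log (Fintype.card A) := by
        rw [hsplit]
        nlinarith
      have heq : f a * (S / ((Fintype.card A : ℝ) * f a) - 1) = S / (Fintype.card A : ℝ) - f a := by
        field_simp
      linarith
  have hsum := Finset.sum_le_sum (fun a (_ : a ∈ univ) => hpt a)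
  rw [Finset.sum_add_distrib, Finset.sum_sub_distrib, Finset.sum_const, card_univ,
    nsmul_eq_mul, ← Finset.sum_mul] at hsum
  rw [mul_div_cancel₀ _ (ne_of_gt hcardpos)] at hsum
  rw [← hS] at hsum
  linarith

end Aux2

section Aux3

variable {A B : Type*} [Fintype A] [Fintype B]

lemma exists_pos_of_isDist (p : A × B → ℝ) (hp : isDist p) : ∃ v, 0 < p v := by
  by_contra h
  push_neg at h
  have : ∑ v, p v ≤ 0 := Finset.sum_nonpos (fun v _ => h v)
  rw [hp.2] at this
  linarith

/-- the min-entropy of any distribution is at most `log₂ |A|`. -/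
lemma minEnt_le_card (p : A × B → ℝ) (hp : isDist p) :
    minEnt p ≤ Real.logb 2 (Fintype.card A) := by
  obtain ⟨v, hv⟩ := exists_pos_of_isDist p hp
  obtain ⟨a, -, hmax⟩ := Finset.exists_max_image univ (fun a => p (a, v.2)) ⟨v.1, mem_univ v.1⟩
  have hap : 0 < p (a, v.2) := lt_of_lt_of_le hv (hmax v.1 (mem_univ v.1))
  have hbdd : BddBelow {r | ∃ a b, 0 < p (a, b) ∧
      r = Real.logb 2 ((∑ a', p (a', b)) / p (a, b))} := by
    refine ⟨0, ?_⟩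
    rintro r ⟨a', b', hpos, rfl⟩
    have hle : p (a', b') ≤ ∑ a'', p (a'', b') :=
      Finset.single_le_sum (fun x _ => hp.1 (x, b')) (mem_univ a')
    exact Real.logb_nonneg one_lt_two ((one_le_div hpos).mpr hle)
  have hmem : Real.logb 2 ((∑ a', p (a', v.2)) / p (a, v.2)) ∈ {r | ∃ a b, 0 < p (a, b) ∧
      r = Real.logb 2 ((∑ a', p (a', b)) / p (a, b))} := ⟨a, v.2, hap, rfl⟩
  refine le_trans (csInf_le hbdd hmem) ?_
  have hsumle : (∑ a', p (a', v.2)) ≤ (Fintype.card A : ℝ) * p (a, v.2) := by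
    calc (∑ a', p (a', v.2)) ≤ ∑ _a' : A, p (a, v.2) :=
          Finset.sum_le_sum (fun x _ => hmax x (mem_univ x))
      _ = (Fintype.card A : ℝ) * p (a, v.2) := by
          rw [Finset.sum_const, card_univ, nsmul_eq_mul]
  have hdivle : (∑ a', p (a', v.2)) / p (a, v.2) ≤ (Fintype.card A : ℝ) := by
    rw [div_le_iff₀ hap]
    linarith
  have hdivpos : 0 < (∑ a', p (a', v.2)) / p (a, v.2) := by
    have hle : p (a, v.2) ≤ ∑ a'', p (a'', v.2) :=
      Finset.single_le_sum (fun x _ => hp.1 (x, v.2)) (mem_univ a)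
    exact div_pos (lt_of_lt_of_le hap hle) hap
  exact Real.logb_le_logb_of_le one_lt_two hdivpos hdivle

/-- lower bound on min-entropy from a pointwise cap. -/
lemma minEnt_ge (p : A × B → ℝ) (hp : isDist p) (R : ℝ)
    (hcap : ∀ a b, 0 < p (a, b) → p (a, b) * (2:ℝ) ^ R ≤ ∑ a', p (a', b)) :
    R ≤ minEnt p := by
  obtain ⟨v, hv⟩ := exists_pos_of_isDist p hp
  have hne : {r | ∃ a b, 0 < p (a, b) ∧
      r = Real.logb 2 ((∑ a', p (a', b)) / p (a, b))}.Nonempty :=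
    ⟨Real.logb 2 ((∑ a', p (a', v.2)) / p (v.1, v.2)), ⟨v.1, v.2, hv, rfl⟩⟩
  apply le_csInf hne
  rintro r ⟨a, b, hpos, rfl⟩
  have h2R : (0:ℝ) < (2:ℝ) ^ R := Real.rpow_pos_of_pos (by norm_num) R
  have hle : (2:ℝ) ^ R ≤ (∑ a', p (a', b)) / p (a, b) := by
    rw [le_div_iff₀ hpos]
    rw [mul_comm]
    exact hcap a b hpos
  calc R = Real.logb 2 ((2:ℝ) ^ R) := (Real.logb_rpow (by norm_num) (by norm_num)).symm
    _ ≤ Real.logb 2 ((∑ a', p (a', b)) / p (a, b)) :=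
        Real.logb_le_logb_of_le one_lt_two h2R hle

/-- identity: `∑ q log (qB/q) = log 2 * (H(q) - H(qB))`. -/
lemma ent_identity (q : A × B → ℝ) (h0 : ∀ v, 0 ≤ q v) :
    ∑ c, q c * Real.log ((∑ a, q (a, c.2)) / q c)
      = Real.log 2 * (entD q - entD (fun b => ∑ a, q (a, b))) := by
  have hlog2 : Real.log 2 ≠ 0 := ne_of_gt (Real.log_pos one_lt_two)
  have h1 : Real.log 2 * entD q = ∑ c, -(q c * Real.log (q c)) := by
    rw [entD, Finset.mul_sum]
    refine Finset.sum_congr rfl (fun c _ => ?_)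
    rw [Real.logb]
    field_simp
  have h2 : Real.log 2 * entD (fun b => ∑ a, q (a, b)) =
      ∑ c : A × B, -(q c * Real.log (∑ a, q (a, c.2))) := by
    rw [entD, Finset.mul_sum]
    rw [Fintype.sum_prod_type_right]
    refine Finset.sum_congr rfl (fun b _ => ?_)
    have : ∑ a, -(q (a, b) * Real.log (∑ a', q (a', b)))
        = -((∑ a, q (a, b)) * Real.log (∑ a', q (a', b))) := by
      rw [Finset.sum_neg_distrib, ← Finset.sum_mul]
    rw [this]
    rw [Real.logb]
    field_simp
  have h3 : ∀ c, q c * Real.log ((∑ a, q (a, c.2)) / q c)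
      = -(q c * Real.log (q c)) - -(q c * Real.log (∑ a, q (a, c.2))) := by
    intro c
    rcases eq_or_lt_of_le (h0 c) with h | hpos
    · rw [← h]; ring
    · have hqB : 0 < ∑ a, q (a, c.2) := by
        calc (0:ℝ) < q c := hpos
          _ = q (c.1, c.2) := by rw [Prod.mk.eta]
          _ ≤ ∑ a, q (a, c.2) := Finset.single_le_sum (fun x _ => h0 (x, c.2)) (mem_univ c.1)
      rw [Real.log_div (ne_of_gt hqB) (ne_of_gt hpos)]
      ring
  calc ∑ c, q c * Real.log ((∑ a, q (a, c.2)) / q c)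
      = ∑ c, (-(q c * Real.log (q c)) - -(q c * Real.log (∑ a, q (a, c.2)))) :=
        Finset.sum_congr rfl (fun c _ => h3 c)
    _ = Real.log 2 * (entD q - entD (fun b => ∑ a, q (a, b))) := by
        rw [Finset.sum_sub_distrib, ← h1, ← h2]; ring

end Aux3

section Aux4

variable {A B : Type*} [Fintype A] [Fintype B]

/-- single letter moment-generating-function bound. -/
lemma mgf_letter (q : A × B → ℝ) (hq : isDist q) (hm : 2 ≤ Fintype.card A)
    (lam : ℝ) (hlam : 0 ≤ lam) :
    ∑ c, q c * (q c / (∑ a, q (a, c.2))) ^ lam ≤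
      Real.exp (-(lam * ∑ c, q c * Real.log ((∑ a, q (a, c.2)) / q c))
        + lam ^ 2 * (11.25 * Real.log (Fintype.card A) ^ 2) / 2) := by
  set qB : B → ℝ := fun b => ∑ a, q (a, b) with hqB
  set T : A × B → ℝ := fun c => Real.log (qB c.2 / q c) with hT
  -- termwise quadratic bound
  have hterm : ∀ c, q c * (q c / qB c.2) ^ lam ≤
      q c - lam * (q c * T c) + lam ^ 2 * (q c * T c ^ 2) / 2 := by
    intro c
    rcases eq_or_lt_of_le (hq.1 c) with h | hpos
    · rw [← h]
      norm_num
    · have hqBpos : 0 < qB c.2 := by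
        calc (0:ℝ) < q c := hpos
          _ = q (c.1, c.2) := by rw [Prod.mk.eta]
          _ ≤ qB c.2 := Finset.single_le_sum (fun x _ => hq.1 (x, c.2)) (mem_univ c.1)
      have hTpos : 0 ≤ T c := by
        apply Real.log_nonneg
        rw [le_div_iff₀ hpos, one_mul]
        calc q c = q (c.1, c.2) := by rw [Prod.mk.eta]
          _ ≤ qB c.2 := Finset.single_le_sum (fun x _ => hq.1 (x, c.2)) (mem_univ c.1)
      have hrw : (q c / qB c.2) ^ lam = Real.exp (-(lam * T c)) := by
        rw [Real.rpow_def_of_pos (div_pos hpos hqBpos)]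
        congr 1
        have hTc : T c = Real.log (qB c.2 / q c) := rfl
        rw [hTc, Real.log_div (ne_of_gt hpos) (ne_of_gt hqBpos),
          Real.log_div (ne_of_gt hqBpos) (ne_of_gt hpos)]
        ring
      rw [hrw]
      have hquad := exp_neg_le_quad (mul_nonneg hlam hTpos)
      have := mul_le_mul_of_nonneg_left hquad (hq.1 c)
      calc q c * Real.exp (-(lam * T c)) ≤ q c * (1 - lam * T c + (lam * T c) ^ 2 / 2) := this
        _ = q c - lam * (q c * T c) + lam ^ 2 * (q c * T c ^ 2) / 2 := by ring
  -- second moment bound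
  have hV : ∑ c, q c * T c ^ 2 ≤ 11.25 * Real.log (Fintype.card A) ^ 2 := by
    have hcol : ∀ b, ∑ a, q (a, b) * T (a, b) ^ 2 ≤ qB b * (11.25 * Real.log (Fintype.card A) ^ 2) := by
      intro b
      rcases eq_or_lt_of_le (Finset.sum_nonneg (fun a (_ : a ∈ univ) => hq.1 (a, b))) with h | hpos
      · have hz : ∀ a, q (a, b) = 0 := by
          intro a
          have := (Finset.sum_eq_zero_iff_of_nonneg (fun a (_ : a ∈ univ) => hq.1 (a, b))).mp h.symm
          exact this a (mem_univ a)
        have : ∑ a, q (a, b) * T (a, b) ^ 2 = 0 :=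
          Finset.sum_eq_zero (fun a _ => by rw [hz a]; ring)
        rw [this]
        have hqBb : qB b = 0 := by rw [hqB]; exact h.symm
        rw [hqBb]
        norm_num
      · set w : A → ℝ := fun a => q (a, b) / qB b with hw
        have hqBb : 0 < qB b := by rw [hqB]; exact hpos
        have hw0 : ∀ a, 0 ≤ w a := fun a => div_nonneg (hq.1 (a, b)) (le_of_lt hqBb)
        have hw1 : ∑ a, w a = 1 := by
          rw [hw, ← Finset.sum_div]
          exact div_self (ne_of_gt hqBb)
        have hlogsq := col_logsq w hw0 hw1 hm
        have hterm2 : ∀ a, q (a, b) * T (a, b) ^ 2 = qB b * (w a * Real.log (w a) ^ 2) := by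
          intro a
          have hwa : w a = q (a, b) / qB b := rfl
          rcases eq_or_lt_of_le (hq.1 (a, b)) with h | hposa
          · rw [hwa, ← h]
            simp
          · have hTab : T (a, b) = -Real.log (w a) := by
              have hTc : T (a, b) = Real.log (qB b / q (a, b)) := rfl
              rw [hTc, hwa, Real.log_div (ne_of_gt hqBb) (ne_of_gt hposa),
                Real.log_div (ne_of_gt hposa) (ne_of_gt hqBb)]
              ring
            rw [hTab, hwa]
            field_simp
        calc ∑ a, q (a, b) * T (a, b) ^ 2 = qB b * ∑ a, (w a * Real.log (w a) ^ 2) := by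
              rw [Finset.mul_sum]
              exact Finset.sum_congr rfl (fun a _ => hterm2 a)
          _ ≤ qB b * (11.25 * Real.log (Fintype.card A) ^ 2) :=
              mul_le_mul_of_nonneg_left hlogsq (le_of_lt hqBb)
    have hqBsum : ∑ b, qB b = 1 := by
      rw [hqB, ← Fintype.sum_prod_type_right]
      exact hq.2
    calc ∑ c, q c * T c ^ 2 = ∑ b, ∑ a, q (a, b) * T (a, b) ^ 2 := by
          rw [Fintype.sum_prod_type_right]
      _ ≤ ∑ b, qB b * (11.25 * Real.log (Fintype.card A) ^ 2) :=
          Finset.sum_le_sum (fun b _ => hcol b)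
      _ = 11.25 * Real.log (Fintype.card A) ^ 2 := by
          rw [← Finset.sum_mul, hqBsum, one_mul]
  -- combine
  have hsum := Finset.sum_le_sum (fun c (_ : c ∈ univ) => hterm c)
  rw [Finset.sum_add_distrib, Finset.sum_sub_distrib, ← Finset.mul_sum, hq.2] at hsum
  have hHnsum : ∑ c, q c * T c = ∑ c, q c * Real.log ((∑ a, q (a, c.2)) / q c) := rfl
  have hlast : ∑ c, lam ^ 2 * (q c * T c ^ 2) / 2 ≤
      lam ^ 2 * (11.25 * Real.log (Fintype.card A) ^ 2) / 2 := by
    have : ∑ c, lam ^ 2 * (q c * T c ^ 2) / 2 = lam ^ 2 * (∑ c, q c * T c ^ 2) / 2 := by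
      rw [Finset.mul_sum]
      rw [Finset.sum_div]
    rw [this]
    have hl2 : 0 ≤ lam ^ 2 / 2 := by positivity
    calc lam ^ 2 * (∑ c, q c * T c ^ 2) / 2 = lam ^ 2 / 2 * (∑ c, q c * T c ^ 2) := by ring
      _ ≤ lam ^ 2 / 2 * (11.25 * Real.log (Fintype.card A) ^ 2) :=
          mul_le_mul_of_nonneg_left hV hl2
      _ = lam ^ 2 * (11.25 * Real.log (Fintype.card A) ^ 2) / 2 := by ring
  have hexp := Real.add_one_le_exp (-(lam * ∑ c, q c * T c)
    + lam ^ 2 * (11.25 * Real.log (Fintype.card A) ^ 2) / 2)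
  rw [hHnsum] at *
  linarith

end Aux4

section Aux5

variable {A B : Type*} [Fintype A] [Fintype B]

/-- smoothing construction: cap the conditional probabilities at `2^(-R)` and
    redistribute the excess inside each column. -/
lemma smoothing (p : A × B → ℝ) (hp : isDist p) (R : ℝ)
    (hR : (2:ℝ) ^ R ≤ (Fintype.card A : ℝ)) :
    ∃ p' : A × B → ℝ, isDist p' ∧
      sd p p' ≤ ∑ v ∈ Finset.univ.filter
          (fun v : A × B => (∑ a, p (a, v.2)) * (2:ℝ) ^ (-R) < p v), p v ∧
      R ≤ minEnt p' := by
  have h2Rpos : (0:ℝ) < (2:ℝ) ^ R := Real.rpow_pos_of_pos (by norm_num) R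
  have h2Rneg : (0:ℝ) < (2:ℝ) ^ (-R) := Real.rpow_pos_of_pos (by norm_num) (-R)
  have hprod : (2:ℝ) ^ (-R) * (2:ℝ) ^ R = 1 := by
    rw [← Real.rpow_add (by norm_num)]
    simp
  set marg : B → ℝ := fun b => ∑ a, p (a, b) with hmarg
  set c : B → ℝ := fun b => marg b * (2:ℝ) ^ (-R) with hcdef
  set mn : A × B → ℝ := fun v => min (p v) (c v.2) with hmn
  set e : B → ℝ := fun b => ∑ a, (p (a, b) - mn (a, b)) with he
  set s : B → ℝ := fun b => ∑ a, (c b - mn (a, b)) with hs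
  have hmarg0 : ∀ b, 0 ≤ marg b := fun b => Finset.sum_nonneg (fun a _ => hp.1 (a, b))
  have hc0 : ∀ b, 0 ≤ c b := fun b => mul_nonneg (hmarg0 b) (le_of_lt h2Rneg)
  have hmn0 : ∀ v, 0 ≤ mn v := fun v => le_min (hp.1 v) (hc0 v.2)
  have hmnp : ∀ v, mn v ≤ p v := fun v => min_le_left _ _
  have hmnc : ∀ v, mn v ≤ c v.2 := fun v => min_le_right _ _
  have hpm0 : ∀ v, 0 ≤ p v - mn v := fun v => sub_nonneg.mpr (hmnp v)
  have hcm0 : ∀ v, 0 ≤ c v.2 - mn v := fun v => sub_nonneg.mpr (hmnc v)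
  have he0 : ∀ b, 0 ≤ e b := fun b => Finset.sum_nonneg (fun a _ => hpm0 (a, b))
  have hs0 : ∀ b, 0 ≤ s b := fun b => Finset.sum_nonneg (fun a _ => hcm0 (a, b))
  have hcard1 : 1 ≤ (Fintype.card A : ℝ) * (2:ℝ) ^ (-R) := by
    calc (1:ℝ) = (2:ℝ) ^ (-R) * (2:ℝ) ^ R := hprod.symm
      _ = (2:ℝ) ^ R * (2:ℝ) ^ (-R) := by ring
      _ ≤ (Fintype.card A : ℝ) * (2:ℝ) ^ (-R) := mul_le_mul_of_nonneg_right hR (le_of_lt h2Rneg)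
  have hes : ∀ b, e b ≤ s b := by
    intro b
    have h1 : s b - e b = (Fintype.card A : ℝ) * c b - marg b := by
      rw [hs, he, ← Finset.sum_sub_distrib]
      have : ∀ a : A, (c b - mn (a, b)) - (p (a, b) - mn (a, b)) = c b - p (a, b) := by
        intro a; ring
      rw [Finset.sum_congr rfl (fun a _ => this a), Finset.sum_sub_distrib,
        Finset.sum_const, card_univ, nsmul_eq_mul]
    have h2 : (Fintype.card A : ℝ) * c b - marg b
        = marg b * ((Fintype.card A : ℝ) * (2:ℝ) ^ (-R) - 1) := by
      rw [hcdef]; ring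
    have h3 : 0 ≤ marg b * ((Fintype.card A : ℝ) * (2:ℝ) ^ (-R) - 1) :=
      mul_nonneg (hmarg0 b) (by linarith)
    linarith
  set fill : A × B → ℝ := fun v => e v.2 * (c v.2 - mn v) / s v.2 with hfilldef
  have hfill0 : ∀ v, 0 ≤ fill v :=
    fun v => div_nonneg (mul_nonneg (he0 v.2) (hcm0 v)) (hs0 v.2)
  have hfill_le : ∀ v, fill v ≤ c v.2 - mn v := by
    intro v
    rcases eq_or_lt_of_le (hs0 v.2) with h | hspos
    · have hcmz : c v.2 - mn v = 0 := by
        have h1 : c v.2 - mn v ≤ s v.2 := by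
          have := Finset.single_le_sum (fun a (_ : a ∈ univ) => hcm0 (a, v.2)) (mem_univ v.1)
          rw [Prod.mk.eta] at this
          exact this
        have h2 := hcm0 v
        rw [← h] at h1
        linarith
      rw [hfilldef]
      simp only
      rw [hcmz]
      norm_num
    · rw [hfilldef]
      simp only
      rw [div_le_iff₀ hspos]
      calc e v.2 * (c v.2 - mn v) ≤ s v.2 * (c v.2 - mn v) :=
            mul_le_mul_of_nonneg_right (hes v.2) (hcm0 v)
        _ = (c v.2 - mn v) * s v.2 := by ring
  set p' : A × B → ℝ := fun v => mn v + fill v with hp'def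
  have hp'0 : ∀ v, 0 ≤ p' v := fun v => add_nonneg (hmn0 v) (hfill0 v)
  have hfillsum : ∀ b, ∑ a, fill (a, b) = e b * s b / s b := by
    intro b
    rw [hfilldef]
    simp only
    rw [← Finset.sum_div, ← Finset.mul_sum]
  have hcol : ∀ b, ∑ a, p' (a, b) = marg b := by
    intro b
    have hesum : e b = marg b - ∑ a, mn (a, b) := by
      have h' : e b = ∑ a, (p (a, b) - mn (a, b)) := rfl
      rw [h', Finset.sum_sub_distrib]
    rw [hp'def]
    simp only
    rw [Finset.sum_add_distrib, hfillsum b]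
    rcases eq_or_ne (s b) 0 with h | h
    · have hez : e b = 0 := le_antisymm (h ▸ hes b) (he0 b)
      rw [h, hez]
      norm_num
      linarith [hesum, hez]
    · rw [mul_div_assoc, div_self h, mul_one]
      linarith [hesum]
  have hp'dist : isDist p' := by
    constructor
    · exact hp'0
    · rw [Fintype.sum_prod_type_right]
      have : ∀ b, ∑ a, p' (a, b) = marg b := hcol
      rw [Finset.sum_congr rfl (fun b _ => hcol b)]
      rw [hmarg]
      rw [← Fintype.sum_prod_type_right]
      exact hp.2
  refine ⟨p', hp'dist, ?_, ?_⟩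
  · -- statistical distance bound
    have habs : ∀ v, |p v - p' v| ≤ (p v - mn v) + fill v := by
      intro v
      rw [hp'def]
      simp only
      rw [abs_le]
      constructor
      · have := hpm0 v; have := hfill0 v; linarith
      · have := hpm0 v; have := hfill0 v; linarith
    have hfill_e : ∀ b, ∑ a, fill (a, b) ≤ e b := by
      intro b
      rw [hfillsum b]
      rcases eq_or_ne (s b) 0 with h | h
      · rw [h]
        norm_num
        exact he0 b
      · rw [mul_div_assoc, div_self h, mul_one]
    have hsum1 : ∑ v, |p v - p' v| ≤ 2 * ∑ b, e b := by
      calc ∑ v, |p v - p' v| ≤ ∑ v, ((p v - mn v) + fill v) :=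
            Finset.sum_le_sum (fun v _ => habs v)
        _ = ∑ b, (∑ a, (p (a, b) - mn (a, b))) + ∑ b, (∑ a, fill (a, b)) := by
            rw [Finset.sum_add_distrib, Fintype.sum_prod_type_right,
              Fintype.sum_prod_type_right (f := fill)]
        _ ≤ ∑ b, e b + ∑ b, e b := by
            apply add_le_add
            · apply le_of_eq
              exact Finset.sum_congr rfl (fun b _ => rfl)
            · exact Finset.sum_le_sum (fun b _ => hfill_e b)
        _ = 2 * ∑ b, e b := by ring
    have hbadsum : ∑ b, e b ≤ ∑ v ∈ Finset.univ.filter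
        (fun v : A × B => (∑ a, p (a, v.2)) * (2:ℝ) ^ (-R) < p v), p v := by
      set badF := Finset.univ.filter
        (fun v : A × B => (∑ a, p (a, v.2)) * (2:ℝ) ^ (-R) < p v) with hbadF
      have h1 : ∑ b, e b = ∑ v, (p v - mn v) := by
        rw [Fintype.sum_prod_type_right]
      have h2 : ∑ v, (p v - mn v) = ∑ v ∈ badF, (p v - mn v) := by
        symm
        apply Finset.sum_subset (Finset.subset_univ badF)
        intro v _ hv
        rw [hbadF, Finset.mem_filter] at hv
        push_neg at hv
        have hple : p v ≤ c v.2 := hv (mem_univ v)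
        have : mn v = p v := min_eq_left hple
        rw [this]
        ring
      rw [h1, h2]
      exact Finset.sum_le_sum (fun v _ => by linarith [hmn0 v])
    rw [sd]
    linarith
  · -- min-entropy bound
    apply minEnt_ge p' hp'dist
    intro a b hpos
    have hcap : p' (a, b) ≤ c b := by
      have h1 := hfill_le (a, b)
      have : p' (a, b) = mn (a, b) + fill (a, b) := rfl
      rw [this]
      linarith
    have hsum : ∑ a', p' (a', b) = marg b := hcol b
    rw [hsum]
    calc p' (a, b) * (2:ℝ) ^ R ≤ c b * (2:ℝ) ^ R :=
          mul_le_mul_of_nonneg_right hcap (le_of_lt h2Rpos)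
      _ = marg b * ((2:ℝ) ^ (-R) * (2:ℝ) ^ R) := by rw [hcdef]; ring
      _ = marg b := by rw [hprod, mul_one]

end Aux5

section Master

variable {A B : Type*} [Fintype A] [Fintype B]

lemma chern_exponent (nr L lgm l2 dl W : ℝ) (hn : 1 ≤ nr) (hL : 0 < L) (hlgm : 0 < lgm)
    (hl2 : 0 < l2) (hl2lt : l2 < 0.6931471808)
    (hW : W = 11.25 * lgm ^ 2) (hsq : dl ^ 2 * l2 ^ 2 = 16 * nr * L * lgm ^ 2) :
    -(dl ^ 2 * l2 ^ 2) / (2 * nr * W) ≤ -(L * l2) := by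
  subst hW
  rw [hsq, neg_div, neg_le_neg_iff, le_div_iff₀ (by positivity)]
  have hX : 0 ≤ nr * L * lgm ^ 2 := by positivity
  have h16 : (0:ℝ) ≤ 16 - 22.5 * l2 := by linarith
  nlinarith [mul_nonneg hX h16]

set_option maxHeartbeats 1000000 in
lemma master (n : ℕ) (hn : 1 ≤ n) (q : A × B → ℝ) (hq : isDist q) (ε : ℝ) (hε : 0 < ε) :
    ∃ p' : (Fin n → A) × (Fin n → B) → ℝ, isDist p' ∧
      sd (fun v : (Fin n → A) × (Fin n → B) => ∏ i, q (v.1 i, v.2 i)) p' ≤ ε ∧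
      (n * (entD q - entD fun b => ∑ a, q (a, b))
        - 4 * Real.sqrt (n * Real.logb 2 (1 / ε)) * Real.logb 2 (Fintype.card A)) ≤ minEnt p' := by
  classical
  set P : (Fin n → A) × (Fin n → B) → ℝ := fun v => ∏ i, q (v.1 i, v.2 i) with hPdef
  have hP0 : ∀ v, 0 ≤ P v := fun v => Finset.prod_nonneg (fun i _ => hq.1 _)
  -- sums of products over pairs of tuples
  have hswap : ∀ g : A × B → ℝ, ∑ v : (Fin n → A) × (Fin n → B), ∏ i, g (v.1 i, v.2 i)
      = (∑ c, g c) ^ n := by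
    intro g
    have h1 : ∑ v : (Fin n → A) × (Fin n → B), ∏ i, g (v.1 i, v.2 i)
        = ∑ h : Fin n → A × B, ∏ i, g (h i) := by
      rw [← Equiv.sum_comp (Equiv.arrowProdEquivProdArrow (Fin n) (fun _ => A) (fun _ => B))
        (fun v : (Fin n → A) × (Fin n → B) => ∏ i, g (v.1 i, v.2 i))]
      exact Finset.sum_congr rfl (fun h _ => Finset.prod_congr rfl (fun i _ => rfl))
    rw [h1, ← Fintype.sum_pow]
  have hPsum : ∑ v, P v = 1 := by
    rw [hPdef, hswap q, hq.2, one_pow]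
  have hPdist : isDist P := ⟨hP0, hPsum⟩
  have hmargP : ∀ y : Fin n → B, ∑ x, P (x, y) = ∏ i, ∑ a, q (a, y i) := by
    intro y
    rw [Fintype.prod_sum (fun i a => q (a, y i))]
  -- nonempty alphabets
  have hA1 : 1 ≤ Fintype.card A := by
    by_contra h
    push_neg at h
    have h0 : Fintype.card A = 0 := by omega
    haveI : IsEmpty A := Fintype.card_eq_zero_iff.mp h0
    have : ∑ c : A × B, q c = 0 := by simp
    rw [hq.2] at this
    norm_num at this
  -- entropy identities
  set Hn := ∑ c, q c * Real.log ((∑ a, q (a, c.2)) / q c) with hHndef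
  set HH := entD q - entD (fun b => ∑ a, q (a, b)) with hHHdef
  have hHn : Hn = Real.log 2 * HH := ent_identity q hq.1
  have hlog2pos : 0 < Real.log 2 := Real.log_pos one_lt_two
  have hHn_le : Hn ≤ Real.log (Fintype.card A) := by
    have h1 : Hn = ∑ b, ∑ a, q (a, b) * Real.log ((∑ a', q (a', b)) / q (a, b)) := by
      rw [hHndef, Fintype.sum_prod_type_right]
    have h2 : ∀ b, ∑ a, q (a, b) * Real.log ((∑ a', q (a', b)) / q (a, b))
        ≤ (∑ a', q (a', b)) * Real.log (Fintype.card A) :=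
      fun b => col_gibbs (fun a => q (a, b)) (fun a => hq.1 (a, b)) hA1
    have h3 : ∑ b, (∑ a', q (a', b)) * Real.log (Fintype.card A)
        = Real.log (Fintype.card A) := by
      rw [← Finset.sum_mul, ← Fintype.sum_prod_type_right, hq.2, one_mul]
    rw [h1]
    calc ∑ b, ∑ a, q (a, b) * Real.log ((∑ a', q (a', b)) / q (a, b))
        ≤ ∑ b, (∑ a', q (a', b)) * Real.log (Fintype.card A) :=
          Finset.sum_le_sum (fun b _ => h2 b)
      _ = Real.log (Fintype.card A) := h3
  set lg := Real.logb 2 (Fintype.card A) with hlgdef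
  have hlg_eq : lg * Real.log 2 = Real.log (Fintype.card A) := by
    rw [hlgdef, Real.logb]
    field_simp
  have hHH_le : HH ≤ lg := by
    have h1 : Real.log 2 * HH ≤ Real.log (Fintype.card A) := hHn ▸ hHn_le
    rw [← hlg_eq] at h1
    nlinarith
  set L := Real.logb 2 (1 / ε) with hLdef
  set RR := (n : ℝ) * HH - 4 * Real.sqrt ((n : ℝ) * L) * lg with hRRdef
  -- trivial case
  rcases le_or_gt RR 0 with hR0 | hRpos
  · refine ⟨P, hPdist, ?_, ?_⟩
    · have hsd0 : sd P P = 0 := by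
        rw [sd]
        simp
      rw [hsd0]
      exact le_of_lt hε
    · refine le_trans hR0 (minEnt_ge P hPdist 0 ?_)
      intro a b hpos
      rw [Real.rpow_zero, mul_one]
      exact Finset.single_le_sum (fun x _ => hP0 (x, b)) (mem_univ a)
  -- nontrivial case : card A ≥ 2
  have hm2 : 2 ≤ Fintype.card A := by
    rcases eq_or_lt_of_le hA1 with h1 | h2
    · exfalso
      obtain ⟨a0, ha0⟩ := Fintype.card_eq_one_iff.mp h1.symm
      have hqB1 : ∀ c : A × B, (∑ a, q (a, c.2)) = q c := by
        intro c
        rw [Finset.sum_eq_single_of_mem c.1 (mem_univ c.1)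
          (fun x _ hx => absurd ((ha0 x).trans (ha0 c.1).symm) hx)]
      have hHn0 : Hn = 0 := by
        rw [hHndef]
        apply Finset.sum_eq_zero
        intro c _
        rcases eq_or_lt_of_le (hq.1 c) with h | hpos
        · rw [← h]; ring
        · rw [hqB1 c, div_self (ne_of_gt hpos), Real.log_one, mul_zero]
      have hHH0 : HH = 0 := by
        have := hHn0 ▸ hHn
        nlinarith
      have hlg0 : lg = 0 := by
        rw [hlgdef, ← h1]
        simp
      rw [hHH0, hlg0] at hRRdef
      rw [hRRdef] at hRpos
      norm_num at hRpos
    · omega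
  have hm2' : (2:ℝ) ≤ (Fintype.card A : ℝ) := by exact_mod_cast hm2
  have hlgpos : 0 < lg := Real.logb_pos one_lt_two (by linarith)
  have hnR : (1:ℝ) ≤ (n:ℝ) := by exact_mod_cast hn
  have hsqrt0 : 0 ≤ Real.sqrt ((n:ℝ) * L) := Real.sqrt_nonneg _
  have hRRle : RR ≤ (n:ℝ) * lg := by
    have h1 : (n:ℝ) * HH ≤ (n:ℝ) * lg :=
      mul_le_mul_of_nonneg_left hHH_le (by linarith)
    have h2 : 0 ≤ 4 * Real.sqrt ((n:ℝ) * L) * lg := by positivity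
    rw [hRRdef]
    linarith
  have hcardfn : (Fintype.card (Fin n → A) : ℝ) = (Fintype.card A : ℝ) ^ n := by
    rw [Fintype.card_fun, Fintype.card_fin]
    push_cast
    ring
  have h2R : (2:ℝ) ^ RR ≤ (Fintype.card (Fin n → A) : ℝ) := by
    rw [hcardfn]
    calc (2:ℝ) ^ RR ≤ (2:ℝ) ^ ((n:ℝ) * lg) :=
          (Real.rpow_le_rpow_left_iff one_lt_two).mpr hRRle
      _ = ((2:ℝ) ^ lg) ^ (n:ℝ) := by
          rw [mul_comm, Real.rpow_mul (by norm_num : (0:ℝ) ≤ 2)]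
      _ = (Fintype.card A : ℝ) ^ (n:ℝ) := by
          rw [hlgdef, Real.rpow_logb (by norm_num) (by norm_num) (by linarith)]
      _ = (Fintype.card A : ℝ) ^ n := Real.rpow_natCast _ n
  obtain ⟨p', hp'dist, hp'sd, hp'me⟩ := smoothing P hPdist RR h2R
  refine ⟨p', hp'dist, le_trans hp'sd ?_, hp'me⟩
  set badF := Finset.univ.filter
    (fun v : (Fin n → A) × (Fin n → B) => (∑ a, P (a, v.2)) * (2:ℝ) ^ (-RR) < P v) with hbadF
  rcases le_or_gt 1 ε with hε1 | hε1
  · -- large ε : the bad mass is at most the total mass 1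
    calc ∑ v ∈ badF, P v ≤ ∑ v, P v :=
          Finset.sum_le_sum_of_subset_of_nonneg (Finset.subset_univ badF)
            (fun v _ _ => hP0 v)
      _ = 1 := hPsum
      _ ≤ ε := hε1
  · -- Chernoff bound
    have hLpos : 0 < L := Real.logb_pos one_lt_two ((one_lt_div hε).mpr hε1)
    set lgm := Real.log (Fintype.card A) with hlgmdef
    have hlgm_pos : 0 < lgm := Real.log_pos (by linarith)
    set W := 11.25 * lgm ^ 2 with hWdef
    have hWpos : 0 < W := by rw [hWdef]; positivity
    set dl := 4 * Real.sqrt ((n:ℝ) * L) * lg with hdldef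
    have hdlpos : 0 < dl := by
      rw [hdldef]
      have : 0 < Real.sqrt ((n:ℝ) * L) := Real.sqrt_pos.mpr (by positivity)
      positivity
    have hRReq : RR = (n:ℝ) * HH - dl := hRRdef
    set lam := dl * Real.log 2 / ((n:ℝ) * W) with hlamdef
    have hlam : 0 ≤ lam := by
      rw [hlamdef]
      positivity
    have h2RRpos : (0:ℝ) < (2:ℝ) ^ RR := Real.rpow_pos_of_pos (by norm_num) RR
    have h2RRneg : (0:ℝ) < (2:ℝ) ^ (-RR) := Real.rpow_pos_of_pos (by norm_num) (-RR)
    have hprodRR : (2:ℝ) ^ (-RR) * (2:ℝ) ^ RR = 1 := by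
      rw [← Real.rpow_add (by norm_num)]
      simp
    set g : A × B → ℝ := fun c => q c * (q c / (∑ a, q (a, c.2))) ^ lam with hgdef
    have hg0 : ∀ c, 0 ≤ g c := by
      intro c
      have hbase : 0 ≤ q c / (∑ a, q (a, c.2)) :=
        div_nonneg (hq.1 c) (Finset.sum_nonneg (fun a _ => hq.1 (a, c.2)))
      exact mul_nonneg (hq.1 c) (Real.rpow_nonneg hbase lam)
    -- pointwise Markov bound on the bad set
    have step1 : ∑ v ∈ badF, P v ≤
        ∑ v, P v * (P v * (2:ℝ) ^ RR / (∑ x, P (x, v.2))) ^ lam := by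
      have hterm0 : ∀ v : (Fin n → A) × (Fin n → B),
          0 ≤ P v * (P v * (2:ℝ) ^ RR / (∑ x, P (x, v.2))) ^ lam := by
        intro v
        have hbase : 0 ≤ P v * (2:ℝ) ^ RR / (∑ x, P (x, v.2)) :=
          div_nonneg (mul_nonneg (hP0 v) (le_of_lt h2RRpos))
            (Finset.sum_nonneg (fun x _ => hP0 (x, v.2)))
        exact mul_nonneg (hP0 v) (Real.rpow_nonneg hbase lam)
      calc ∑ v ∈ badF, P v
          ≤ ∑ v ∈ badF, P v * (P v * (2:ℝ) ^ RR / (∑ x, P (x, v.2))) ^ lam := by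
            apply Finset.sum_le_sum
            intro v hv
            rw [hbadF, Finset.mem_filter] at hv
            have hbad := hv.2
            have hPvpos : 0 < P v :=
              lt_of_le_of_lt (mul_nonneg (Finset.sum_nonneg (fun x _ => hP0 (x, v.2)))
                (le_of_lt h2RRneg)) hbad
            have hmargpos : 0 < ∑ x, P (x, v.2) := by
              have h := Finset.single_le_sum
                (fun x (_ : x ∈ univ) => hP0 (x, v.2)) (mem_univ v.1)
              rw [Prod.mk.eta] at h
              linarith
            have h1t : 1 ≤ P v * (2:ℝ) ^ RR / (∑ x, P (x, v.2)) := by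
              rw [le_div_iff₀ hmargpos, one_mul]
              have h2 := mul_lt_mul_of_pos_right hbad h2RRpos
              rw [mul_assoc, hprodRR, mul_one] at h2
              exact le_of_lt h2
            have h1lam : 1 ≤ (P v * (2:ℝ) ^ RR / (∑ x, P (x, v.2))) ^ lam := by
              calc (1:ℝ) = (1:ℝ) ^ lam := (Real.one_rpow lam).symm
                _ ≤ _ := Real.rpow_le_rpow zero_le_one h1t hlam
            calc P v = P v * 1 := (mul_one _).symm
              _ ≤ _ := mul_le_mul_of_nonneg_left h1lam (hP0 v)
        _ ≤ ∑ v, P v * (P v * (2:ℝ) ^ RR / (∑ x, P (x, v.2))) ^ lam :=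
            Finset.sum_le_sum_of_subset_of_nonneg (Finset.subset_univ badF)
              (fun v _ _ => hterm0 v)
    -- pointwise factorization
    have step2 : ∀ v : (Fin n → A) × (Fin n → B),
        P v * (P v * (2:ℝ) ^ RR / (∑ x, P (x, v.2))) ^ lam
          = (2:ℝ) ^ (RR * lam) * ∏ i, g (v.1 i, v.2 i) := by
      intro v
      by_cases hPv : P v = 0
      · obtain ⟨i, -, hqi⟩ := Finset.prod_eq_zero_iff.mp hPv
        have hgz : g (v.1 i, v.2 i) = 0 := by
          rw [hgdef]
          simp only
          rw [hqi, zero_mul]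
        rw [hPv, zero_mul, Finset.prod_eq_zero (mem_univ i) hgz, mul_zero]
      · have hqips : ∀ i, 0 < q (v.1 i, v.2 i) := by
          intro i
          rcases eq_or_lt_of_le (hq.1 (v.1 i, v.2 i)) with h | h
          · exfalso
            exact hPv (Finset.prod_eq_zero (mem_univ i) h.symm)
          · exact h
        have hqBpos : ∀ i, 0 < ∑ a, q (a, v.2 i) := by
          intro i
          exact lt_of_lt_of_le (hqips i)
            (Finset.single_le_sum (fun a (_ : a ∈ univ) => hq.1 (a, v.2 i)) (mem_univ (v.1 i)))
        have hmargeq : (∑ x, P (x, v.2)) = ∏ i, ∑ a, q (a, v.2 i) := hmargP v.2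
        have hmargpos : 0 < ∑ x, P (x, v.2) := by
          rw [hmargeq]
          exact Finset.prod_pos (fun i _ => hqBpos i)
        have hPmarg : P v / (∑ x, P (x, v.2))
            = ∏ i, (q (v.1 i, v.2 i) / (∑ a, q (a, v.2 i))) := by
          rw [hmargeq, hPdef]
          simp only
          rw [Finset.prod_div_distrib]
        have hsplit : P v * (2:ℝ) ^ RR / (∑ x, P (x, v.2))
            = (2:ℝ) ^ RR * (P v / (∑ x, P (x, v.2))) := by ring
        have hPdivnn : 0 ≤ P v / (∑ x, P (x, v.2)) := div_nonneg (hP0 v) (le_of_lt hmargpos)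
        rw [hsplit, Real.mul_rpow (Real.rpow_nonneg (by norm_num) RR) hPdivnn]
        rw [← Real.rpow_mul (by norm_num : (0:ℝ) ≤ 2) RR lam]
        rw [hPmarg, ← Real.finset_prod_rpow univ _
          (fun i _ => div_nonneg (hq.1 _) (le_of_lt (hqBpos i))) lam]
        have hgprod : ∏ i, g (v.1 i, v.2 i)
            = (∏ i, q (v.1 i, v.2 i)) * ∏ i, (q (v.1 i, v.2 i) / (∑ a, q (a, v.2 i))) ^ lam := by
          rw [hgdef]
          simp only
          rw [Finset.prod_mul_distrib]
        rw [hgprod, hPdef]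
        ring
    -- mgf bound
    have hmgf := mgf_letter q hq hm2 lam hlam
    have hF0 : 0 ≤ ∑ c, g c := Finset.sum_nonneg (fun c _ => hg0 c)
    -- numeric endgame
    have hδsq : dl ^ 2 * Real.log 2 ^ 2 = 16 * (n:ℝ) * L * lgm ^ 2 := by
      have hs : Real.sqrt ((n:ℝ) * L) ^ 2 = (n:ℝ) * L := Real.sq_sqrt (by positivity)
      calc dl ^ 2 * Real.log 2 ^ 2
          = 16 * Real.sqrt ((n:ℝ) * L) ^ 2 * (lg * Real.log 2) ^ 2 := by
            rw [hdldef]; ring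
        _ = 16 * (n:ℝ) * L * lgm ^ 2 := by rw [hs, hlg_eq, hlgmdef]; ring
    have hnne : (n:ℝ) ≠ 0 := by linarith
    have hWne : W ≠ 0 := ne_of_gt hWpos
    have hE2 : -(lam * Real.log 2 * dl) + (n:ℝ) * lam ^ 2 * W / 2
        = -(dl ^ 2 * Real.log 2 ^ 2) / (2 * (n:ℝ) * W) := by
      rw [hlamdef]
      field_simp
      ring
    have hlogε : Real.log ε = -(L * Real.log 2) := by
      have h1 : L = Real.log (1 / ε) / Real.log 2 := rfl
      rw [h1, Real.log_div one_ne_zero (ne_of_gt hε), Real.log_one]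
      field_simp
      ring
    have hfinal := chern_exponent (n:ℝ) L lgm (Real.log 2) dl W hnR hLpos hlgm_pos
      hlog2pos Real.log_two_lt_d9 hWdef hδsq
    -- assemble
    calc ∑ v ∈ badF, P v
        ≤ ∑ v, P v * (P v * (2:ℝ) ^ RR / (∑ x, P (x, v.2))) ^ lam := step1
      _ = (2:ℝ) ^ (RR * lam) * (∑ c, g c) ^ n := by
          rw [Finset.sum_congr rfl (fun v _ => step2 v), ← Finset.mul_sum, hswap g]
      _ ≤ (2:ℝ) ^ (RR * lam) * (Real.exp (-(lam * Hn) + lam ^ 2 * W / 2)) ^ n := by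
          apply mul_le_mul_of_nonneg_left _ (Real.rpow_nonneg (by norm_num) _)
          exact pow_le_pow_left₀ hF0 hmgf n
      _ = Real.exp (Real.log 2 * (RR * lam) + (n:ℝ) * (-(lam * Hn) + lam ^ 2 * W / 2)) := by
          rw [Real.rpow_def_of_pos (by norm_num : (0:ℝ) < 2), ← Real.exp_nat_mul,
            ← Real.exp_add]
      _ ≤ Real.exp (Real.log ε) := by
          apply Real.exp_le_exp.mpr
          have hE1 : Real.log 2 * (RR * lam) + (n:ℝ) * (-(lam * Hn) + lam ^ 2 * W / 2)
              = -(lam * Real.log 2 * dl) + (n:ℝ) * lam ^ 2 * W / 2 := by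
            rw [hHn, hRReq]
            ring
          rw [hE1, hE2, hlogε]
          exact hfinal
      _ = ε := Real.exp_log hε

end Master


/-- Holenstein, Corollary 2.12: if `(X₁,Y₁),…,(Xₙ,Yₙ)` are i.i.d. with common
joint distribution `q` (i.e. the joint distribution of `(Xⁿ, Yⁿ)` is the `n`-fold product
of `q`), then for any `ε > 0`,
`H^ε_∞(Xⁿ|Yⁿ) ≥ n·H(X|Y) − 4·√(n·log₂(1/ε))·log₂|𝒳|`. -/
theorem statement5 {Ω A B : Type*} [Fintype Ω] [Fintype A] [Fintype B]
    (μ : Ω → ℝ) (hμ : isDist μ) (n : ℕ) (hn : 1 ≤ n)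
    (X : Fin n → Ω → A) (Y : Fin n → Ω → B)
    (q : A × B → ℝ) (hq : isDist q)
    (hiid : jd μ (fun ω i => X i ω) (fun ω i => Y i ω) = fun v => ∏ i, q (v.1 i, v.2 i))
    (ε : ℝ) (hε : 0 < ε) :
    sminEnt (jd μ (fun ω i => X i ω) (fun ω i => Y i ω)) ε ≥
      n * (entD q - entD fun b => ∑ a, q (a, b))
        - 4 * Real.sqrt (n * Real.logb 2 (1 / ε)) * Real.logb 2 (Fintype.card A) := by
  rw [hiid, ge_iff_le, sminEnt]
  obtain ⟨p', h1, h2, h3⟩ := master n hn q hq ε hε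
  have hbdd : BddAbove {r | ∃ q' : ((Fin n → A) × (Fin n → B)) → ℝ,
      isDist q' ∧ sd (fun v => ∏ i, q (v.1 i, v.2 i)) q' ≤ ε ∧ r = minEnt q'} := by
    refine ⟨Real.logb 2 (Fintype.card (Fin n → A)), ?_⟩
    rintro r ⟨q'', hd, -, rfl⟩
    exact minEnt_le_card q'' hd
  exact le_trans h3 (le_csSup hbdd ⟨p', h1, h2, rfl⟩)
end
end

section
/- Let C, X₀, X₁, Y₀, Y₁, Z₀, Z₁ be random variables taking values in finite sets such that (i) H(Y₁ | (C, X₀, X₁, Y₀, Z₀, Z₁)) = H(Y₁ | (X₁, Z₁)) and (ii) H(Y₀ | (C, X₀, X₁, Z₀, Z₁)) = H(Y₀ | (C, X₀, Z₀)). Then I((X₀, X₁); (Y₀, Y₁) | (C, Z₀, Z₁)) ≤ I(X₀; Y₀ | (C, Z₀)) + I(X₁; Y₁ | Z₁). -/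
open scoped BigOperators Classical

noncomputable section

open OT


namespace OT
set_option linter.unusedSectionVars false
variable {Ω : Type*} [Fintype Ω]

lemma dst_apply {α : Type*} (μ : Ω → ℝ) (X : Ω → α) (a : α) :
    dst μ X a = ∑ ω, if X ω = a then μ ω else 0 := by
  unfold dst pr
  refine Finset.sum_congr rfl fun ω _ => ?_
  by_cases h : X ω = a <;> simp [Set.indicator_apply, Set.mem_setOf_eq, h]

lemma dst_nonneg {α : Type*} (μ : Ω → ℝ) (hμ : ∀ ω, 0 ≤ μ ω) (X : Ω → α) (a : α) :
    0 ≤ dst μ X a := by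
  rw [dst_apply]
  exact Finset.sum_nonneg fun ω _ => by split_ifs <;> simp [hμ ω]

lemma dst_sum {α : Type*} [Fintype α] (μ : Ω → ℝ) (X : Ω → α) :
    ∑ a, dst μ X a = ∑ ω, μ ω := by
  simp_rw [dst_apply]
  rw [Finset.sum_comm]
  refine Finset.sum_congr rfl fun ω _ => ?_
  simp

lemma ent_congr {α β : Type*} [Fintype α] [Fintype β] (μ : Ω → ℝ) (X : Ω → α) (Y : Ω → β)
    (e : α → β) (he : Function.Injective e) (h : ∀ ω, Y ω = e (X ω)) :
    ent μ Y = ent μ X := by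
  have hd : ∀ a, dst μ Y (e a) = dst μ X a := by
    intro a
    simp_rw [dst_apply, h]
    refine Finset.sum_congr rfl fun ω _ => ?_
    by_cases hx : X ω = a
    · simp [hx]
    · have : e (X ω) ≠ e a := fun hc => hx (he hc)
      simp [hx, this]
  have hz : ∀ b, (∀ a, e a ≠ b) → dst μ Y b = 0 := by
    intro b hb
    rw [dst_apply]
    refine Finset.sum_eq_zero fun ω _ => ?_
    simp [h ω, hb (X ω)]
  unfold ent entD
  set F : β → ℝ := fun b => -(dst μ Y b * Real.logb 2 (dst μ Y b)) with hF
  have step1 : ∑ b : β, F b = ∑ b ∈ Finset.univ.image e, F b := by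
    refine (Finset.sum_subset (Finset.subset_univ _) ?_).symm
    intro b _ hb
    have : dst μ Y b = 0 :=
      hz b (fun a hab => hb (Finset.mem_image.mpr ⟨a, Finset.mem_univ a, hab⟩))
    simp [hF, this]
  have step2 : ∑ b ∈ Finset.univ.image e, F b = ∑ a : α, F (e a) :=
    Finset.sum_image (fun a _ b _ hab => he hab)
  rw [step1, step2]
  refine Finset.sum_congr rfl fun a _ => ?_
  simp [hF, hd a]

lemma entD_eq {α : Type*} [Fintype α] (q : α → ℝ) :
    entD q = (∑ a, -(q a * Real.log (q a))) / Real.log 2 := by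
  unfold entD
  rw [Finset.sum_div]
  refine Finset.sum_congr rfl fun a _ => ?_
  rw [Real.logb, neg_div, mul_div_assoc]

lemma sum_neg_mul {ι : Type*} [Fintype ι] (f : ι → ℝ) (L : ℝ) :
    ∑ i, -(f i * L) = -((∑ i, f i) * L) := by
  rw [Finset.sum_mul, ← Finset.sum_neg_distrib]

lemma entD_submod {α β γ : Type*} [Fintype α] [Fintype β] [Fintype γ]
    (p : α × β × γ → ℝ) (hp : isDist p) :
    entD p + entD (fun c => ∑ a, ∑ b, p (a, b, c))
      ≤ entD (fun x : α × γ => ∑ b, p (x.1, b, x.2))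
        + entD (fun x : β × γ => ∑ a, p (a, x.1, x.2)) := by
  obtain ⟨hp0, hp1⟩ := hp
  set q1 : α → γ → ℝ := fun a c => ∑ b, p (a, b, c) with hq1def
  set q2 : β → γ → ℝ := fun b c => ∑ a, p (a, b, c) with hq2def
  set q3 : γ → ℝ := fun c => ∑ a, ∑ b, p (a, b, c) with hq3def
  have hq1n : ∀ a c, 0 ≤ q1 a c := fun a c => Finset.sum_nonneg fun b _ => hp0 _
  have hq2n : ∀ b c, 0 ≤ q2 b c := fun b c => Finset.sum_nonneg fun a _ => hp0 _
  have hq3n : ∀ c, 0 ≤ q3 c := fun c =>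
    Finset.sum_nonneg fun a _ => Finset.sum_nonneg fun b _ => hp0 _
  have hple1 : ∀ a b c, p (a, b, c) ≤ q1 a c := fun a b c =>
    Finset.single_le_sum (f := fun b => p (a, b, c)) (fun b _ => hp0 _) (Finset.mem_univ b)
  have hple2 : ∀ a b c, p (a, b, c) ≤ q2 b c := fun a b c =>
    Finset.single_le_sum (f := fun a => p (a, b, c)) (fun a _ => hp0 _) (Finset.mem_univ a)
  have hq1le3 : ∀ a c, q1 a c ≤ q3 c := fun a c =>
    Finset.single_le_sum (f := fun a => q1 a c) (fun a _ => hq1n a c) (Finset.mem_univ a)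
  have hq2le3 : ∀ b c, q2 b c ≤ q3 c := fun b c => by
    have : q3 c = ∑ b, q2 b c := Finset.sum_comm ..
    rw [this]
    exact Finset.single_le_sum (f := fun b => q2 b c) (fun b _ => hq2n b c) (Finset.mem_univ b)
  -- sum over triple as iterated sums
  have etriple : ∑ t : α × β × γ, p t = ∑ a, ∑ b, ∑ c, p (a, b, c) := by
    rw [Fintype.sum_prod_type]
    exact Finset.sum_congr rfl fun a _ => Fintype.sum_prod_type ..
  have hsum1 : ∑ a, ∑ b, ∑ c, p (a, b, c) = 1 := by rw [← etriple]; exact hp1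
  -- natural-log entropies expanded over the triple product
  have eqp : (∑ t : α × β × γ, -(p t * Real.log (p t)))
      = ∑ a, ∑ b, ∑ c, -(p (a, b, c) * Real.log (p (a, b, c))) := by
    rw [Fintype.sum_prod_type]
    exact Finset.sum_congr rfl fun a _ => Fintype.sum_prod_type ..
  have eq1 : (∑ x : α × γ, -(q1 x.1 x.2 * Real.log (q1 x.1 x.2)))
      = ∑ a, ∑ b, ∑ c, -(p (a, b, c) * Real.log (q1 a c)) := by
    rw [Fintype.sum_prod_type]
    refine Finset.sum_congr rfl fun a _ => ?_
    rw [Finset.sum_comm]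
    refine Finset.sum_congr rfl fun c _ => ?_
    exact (sum_neg_mul (fun b => p (a, b, c)) _).symm
  have eq2 : (∑ x : β × γ, -(q2 x.1 x.2 * Real.log (q2 x.1 x.2)))
      = ∑ a, ∑ b, ∑ c, -(p (a, b, c) * Real.log (q2 b c)) := by
    have step : (∑ x : β × γ, -(q2 x.1 x.2 * Real.log (q2 x.1 x.2)))
        = ∑ b, ∑ c, ∑ a, -(p (a, b, c) * Real.log (q2 b c)) := by
      rw [Fintype.sum_prod_type]
      refine Finset.sum_congr rfl fun b _ => Finset.sum_congr rfl fun c _ => ?_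
      exact (sum_neg_mul (fun a => p (a, b, c)) _).symm
    rw [step]
    have h1 : ∀ b, (∑ c, ∑ a, -(p (a, b, c) * Real.log (q2 b c)))
        = ∑ a, ∑ c, -(p (a, b, c) * Real.log (q2 b c)) := fun b => Finset.sum_comm ..
    simp_rw [h1]
    exact Finset.sum_comm ..
  have eq3 : (∑ c, -(q3 c * Real.log (q3 c)))
      = ∑ a, ∑ b, ∑ c, -(p (a, b, c) * Real.log (q3 c)) := by
    have step : (∑ c, -(q3 c * Real.log (q3 c)))
        = ∑ c, ∑ a, ∑ b, -(p (a, b, c) * Real.log (q3 c)) := by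
      refine Finset.sum_congr rfl fun c _ => ?_
      have : ∀ a, (∑ b, -(p (a, b, c) * Real.log (q3 c)))
          = -(q1 a c * Real.log (q3 c)) := fun a => sum_neg_mul (fun b => p (a, b, c)) _
      simp_rw [this]
      exact (sum_neg_mul (fun a => q1 a c) _).symm
    rw [step, Finset.sum_comm]
    exact Finset.sum_congr rfl fun a _ => Finset.sum_comm ..
  -- pointwise Gibbs bound
  have hpoint : ∀ a b c,
      p (a, b, c) - q1 a c * q2 b c / q3 c ≤
        -(p (a, b, c) * Real.log (q1 a c)) + -(p (a, b, c) * Real.log (q2 b c))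
          - -(p (a, b, c) * Real.log (p (a, b, c))) - -(p (a, b, c) * Real.log (q3 c)) := by
    intro a b c
    set P := p (a, b, c) with hP
    by_cases hP0 : P = 0
    · have : 0 ≤ q1 a c * q2 b c / q3 c :=
        div_nonneg (mul_nonneg (hq1n a c) (hq2n b c)) (hq3n c)
      simp [hP0]
      linarith
    · have hPpos : 0 < P := lt_of_le_of_ne (hp0 _) (Ne.symm hP0)
      have hA : 0 < q1 a c := lt_of_lt_of_le hPpos (hple1 a b c)
      have hB : 0 < q2 b c := lt_of_lt_of_le hPpos (hple2 a b c)
      have hC : 0 < q3 c := lt_of_lt_of_le hA (hq1le3 a c)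
      have hr : (0:ℝ) < q1 a c * q2 b c / (P * q3 c) := by positivity
      have hexp : Real.log (q1 a c * q2 b c / (P * q3 c))
          = Real.log (q1 a c) + Real.log (q2 b c) - Real.log P - Real.log (q3 c) := by
        rw [Real.log_div (by positivity) (by positivity),
          Real.log_mul hA.ne' hB.ne', Real.log_mul hPpos.ne' hC.ne']
        ring
      have h2 : Real.log (q1 a c) + Real.log (q2 b c) - Real.log P - Real.log (q3 c)
          ≤ q1 a c * q2 b c / (P * q3 c) - 1 := by
        rw [← hexp]; exact Real.log_le_sub_one_of_pos hr
      have h3 := mul_le_mul_of_nonneg_left h2 hPpos.le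
      have h4 : P * (q1 a c * q2 b c / (P * q3 c) - 1) = q1 a c * q2 b c / q3 c - P := by
        field_simp
      nlinarith [h3, h4]
  -- the cross-term sums to at most 1
  have hS : ∑ a, ∑ b, ∑ c, (q1 a c * q2 b c / q3 c) ≤ 1 := by
    have rot : ∑ a, ∑ b, ∑ c, (q1 a c * q2 b c / q3 c)
        = ∑ c, ∑ a, ∑ b, (q1 a c * q2 b c / q3 c) := by
      have h1 : ∀ a : α, (∑ b : β, ∑ c : γ, (q1 a c * q2 b c / q3 c))
          = ∑ c, ∑ b, (q1 a c * q2 b c / q3 c) := fun a => Finset.sum_comm ..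
      simp_rw [h1]
      exact Finset.sum_comm ..
    rw [rot]
    have hq2sum : ∀ c, ∑ b, q2 b c = q3 c := fun c => Finset.sum_comm ..
    have hinner : ∀ c, (∑ a, ∑ b, (q1 a c * q2 b c / q3 c)) ≤ q3 c := by
      intro c
      by_cases hc : q3 c = 0
      · have hz : ∀ a, q1 a c = 0 := by
          intro a
          have h1 := hq1n a c
          have h2 := hq1le3 a c
          linarith [hc ▸ h2]
        simp [hz, hc]
      · have : ∀ a, (∑ b, (q1 a c * q2 b c / q3 c)) = q1 a c * q3 c / q3 c := by
          intro a
          rw [← Finset.sum_div, ← Finset.mul_sum, hq2sum c]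
        simp_rw [this]
        rw [← Finset.sum_div, ← Finset.sum_mul]
        have hsq1 : ∑ a, q1 a c = q3 c := rfl
        rw [hsq1, mul_div_assoc, div_self hc, mul_one]
    calc ∑ c, ∑ a, ∑ b, (q1 a c * q2 b c / q3 c) ≤ ∑ c, q3 c :=
          Finset.sum_le_sum fun c _ => hinner c
      _ = 1 := by
          have h1 : ∀ a : α, (∑ c : γ, ∑ b : β, p (a, b, c)) = ∑ b, ∑ c, p (a, b, c) :=
            fun a => Finset.sum_comm ..
          calc ∑ c, q3 c = ∑ a, ∑ c, ∑ b, p (a, b, c) := Finset.sum_comm ..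
            _ = ∑ a, ∑ b, ∑ c, p (a, b, c) := by simp_rw [h1]
            _ = 1 := hsum1
  -- assemble
  have hlog2 : (0:ℝ) < Real.log 2 := Real.log_pos one_lt_two
  rw [entD_eq, entD_eq, entD_eq, entD_eq]
  rw [← add_div, ← add_div, div_le_div_iff₀ hlog2 hlog2]
  have hmain : (∑ a, ∑ b, ∑ c, -(p (a, b, c) * Real.log (p (a, b, c))))
      + (∑ a, ∑ b, ∑ c, -(p (a, b, c) * Real.log (q3 c)))
      ≤ (∑ a, ∑ b, ∑ c, -(p (a, b, c) * Real.log (q1 a c)))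
      + (∑ a, ∑ b, ∑ c, -(p (a, b, c) * Real.log (q2 b c))) := by
    have hbig : ∑ a, ∑ b, ∑ c,
        (p (a, b, c) - q1 a c * q2 b c / q3 c)
        ≤ ∑ a, ∑ b, ∑ c,
          (-(p (a, b, c) * Real.log (q1 a c)) + -(p (a, b, c) * Real.log (q2 b c))
            - -(p (a, b, c) * Real.log (p (a, b, c))) - -(p (a, b, c) * Real.log (q3 c))) := by
      refine Finset.sum_le_sum fun a _ => Finset.sum_le_sum fun b _ =>
        Finset.sum_le_sum fun c _ => hpoint a b c
    have hL : ∑ a, ∑ b, ∑ c, (p (a, b, c) - q1 a c * q2 b c / q3 c)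
        = 1 - ∑ a, ∑ b, ∑ c, (q1 a c * q2 b c / q3 c) := by
      simp_rw [Finset.sum_sub_distrib]
      rw [hsum1]
    have hR : ∑ a, ∑ b, ∑ c,
        (-(p (a, b, c) * Real.log (q1 a c)) + -(p (a, b, c) * Real.log (q2 b c))
          - -(p (a, b, c) * Real.log (p (a, b, c))) - -(p (a, b, c) * Real.log (q3 c)))
        = (∑ a, ∑ b, ∑ c, -(p (a, b, c) * Real.log (q1 a c)))
          + (∑ a, ∑ b, ∑ c, -(p (a, b, c) * Real.log (q2 b c)))
          - (∑ a, ∑ b, ∑ c, -(p (a, b, c) * Real.log (p (a, b, c))))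
          - (∑ a, ∑ b, ∑ c, -(p (a, b, c) * Real.log (q3 c))) := by
      simp_rw [Finset.sum_sub_distrib, Finset.sum_add_distrib]
    rw [hL, hR] at hbig
    linarith [hS, hbig]
  calc (∑ t : α × β × γ, -(p t * Real.log (p t)) + ∑ c, -(q3 c * Real.log (q3 c))) * Real.log 2
      = ((∑ a, ∑ b, ∑ c, -(p (a, b, c) * Real.log (p (a, b, c))))
        + (∑ a, ∑ b, ∑ c, -(p (a, b, c) * Real.log (q3 c)))) * Real.log 2 := by
        rw [eqp, eq3]
    _ ≤ ((∑ a, ∑ b, ∑ c, -(p (a, b, c) * Real.log (q1 a c)))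
        + (∑ a, ∑ b, ∑ c, -(p (a, b, c) * Real.log (q2 b c)))) * Real.log 2 := by
        exact mul_le_mul_of_nonneg_right hmain hlog2.le
    _ = (∑ x : α × γ, -(q1 x.1 x.2 * Real.log (q1 x.1 x.2))
        + ∑ x : β × γ, -(q2 x.1 x.2 * Real.log (q2 x.1 x.2))) * Real.log 2 := by
        rw [eq1, eq2]

variable {α β γ : Type*} [Fintype α] [Fintype β] [Fintype γ]

lemma dst_marg1 (μ : Ω → ℝ) (X : Ω → α) (Y : Ω → β) (Z : Ω → γ) (x : α × γ) :
    dst μ (fun ω => (X ω, Z ω)) x = ∑ b, dst μ (fun ω => (X ω, Y ω, Z ω)) (x.1, b, x.2) := by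
  simp_rw [dst_apply]
  rw [Finset.sum_comm]
  refine Finset.sum_congr rfl fun ω _ => ?_
  by_cases h : X ω = x.1 ∧ Z ω = x.2
  · simp [Prod.ext_iff, h.1, h.2, Finset.sum_ite_eq]
  · rw [if_neg (by simpa [Prod.ext_iff] using h)]
    refine (Finset.sum_eq_zero fun b _ => ?_).symm
    rw [if_neg]
    intro hc
    rw [Prod.ext_iff, Prod.ext_iff] at hc
    exact h ⟨hc.1, hc.2.2⟩

lemma dst_marg2 (μ : Ω → ℝ) (X : Ω → α) (Y : Ω → β) (Z : Ω → γ) (x : β × γ) :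
    dst μ (fun ω => (Y ω, Z ω)) x = ∑ a, dst μ (fun ω => (X ω, Y ω, Z ω)) (a, x.1, x.2) := by
  simp_rw [dst_apply]
  rw [Finset.sum_comm]
  refine Finset.sum_congr rfl fun ω _ => ?_
  by_cases h : Y ω = x.1 ∧ Z ω = x.2
  · simp [Prod.ext_iff, h.1, h.2, Finset.sum_ite_eq]
  · rw [if_neg (by simpa [Prod.ext_iff] using h)]
    refine (Finset.sum_eq_zero fun a _ => ?_).symm
    rw [if_neg]
    intro hc
    rw [Prod.ext_iff, Prod.ext_iff] at hc
    exact h ⟨hc.2.1, hc.2.2⟩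

lemma dst_marg3 (μ : Ω → ℝ) (X : Ω → α) (Y : Ω → β) (Z : Ω → γ) (c : γ) :
    dst μ Z c = ∑ a, ∑ b, dst μ (fun ω => (X ω, Y ω, Z ω)) (a, b, c) := by
  simp_rw [dst_apply]
  have point : ∀ ω, (if Z ω = c then μ ω else 0)
      = ∑ a, ∑ b, if (X ω, Y ω, Z ω) = (a, b, c) then μ ω else 0 := by
    intro ω
    by_cases hz : Z ω = c
    · simp [Prod.ext_iff, hz, ite_and, Finset.sum_ite_eq]
    · rw [if_neg hz]
      refine (Finset.sum_eq_zero fun a _ => Finset.sum_eq_zero fun b _ => ?_).symm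
      rw [if_neg]
      intro hc
      rw [Prod.ext_iff, Prod.ext_iff] at hc
      exact hz hc.2.2
  simp_rw [point]
  rw [Finset.sum_comm]
  refine Finset.sum_congr rfl fun a _ => ?_
  rw [Finset.sum_comm]
  refine Finset.sum_congr rfl fun b _ => Finset.sum_congr rfl fun ω _ => ?_
  congr

lemma cmi_nonneg (μ : Ω → ℝ) (hμ : isDist μ) (X : Ω → α) (Y : Ω → β) (Z : Ω → γ) :
    0 ≤ cmi μ X Y Z := by
  set p : α × β × γ → ℝ := dst μ (fun ω => (X ω, Y ω, Z ω)) with hpdef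
  have hp : isDist p := ⟨fun t => dst_nonneg μ hμ.1 _ t, by
    rw [hpdef, dst_sum]; exact hμ.2⟩
  have h1 : dst μ (fun ω => (X ω, Z ω)) = fun x : α × γ => ∑ b, p (x.1, b, x.2) :=
    funext fun x => dst_marg1 μ X Y Z x
  have h2 : dst μ (fun ω => (Y ω, Z ω)) = fun x : β × γ => ∑ a, p (a, x.1, x.2) :=
    funext fun x => dst_marg2 μ X Y Z x
  have h3 : dst μ Z = fun c => ∑ a, ∑ b, p (a, b, c) :=
    funext fun c => dst_marg3 μ X Y Z c
  have key := entD_submod p hp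
  unfold cmi ent
  rw [h1, h2, h3, ← hpdef]
  linarith

end OT

/-- if (i) `H(Y₁|(C,X₀,X₁,Y₀,Z₀,Z₁)) = H(Y₁|(X₁,Z₁))` and
(ii) `H(Y₀|(C,X₀,X₁,Z₀,Z₁)) = H(Y₀|(C,X₀,Z₀))`, then
`I((X₀,X₁);(Y₀,Y₁)|(C,Z₀,Z₁)) ≤ I(X₀;Y₀|(C,Z₀)) + I(X₁;Y₁|Z₁)`. -/
theorem statement11 {Ω A X0t X1t Y0t Y1t Z0t Z1t : Type*} [Fintype Ω] [Fintype A]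
    [Fintype X0t] [Fintype X1t] [Fintype Y0t] [Fintype Y1t] [Fintype Z0t] [Fintype Z1t]
    (μ : Ω → ℝ) (hμ : isDist μ)
    (C : Ω → A) (X₀ : Ω → X0t) (X₁ : Ω → X1t) (Y₀ : Ω → Y0t) (Y₁ : Ω → Y1t)
    (Z₀ : Ω → Z0t) (Z₁ : Ω → Z1t)
    (h1 : condEnt μ Y₁ (fun ω => (C ω, X₀ ω, X₁ ω, Y₀ ω, Z₀ ω, Z₁ ω))
        = condEnt μ Y₁ (fun ω => (X₁ ω, Z₁ ω)))
    (h2 : condEnt μ Y₀ (fun ω => (C ω, X₀ ω, X₁ ω, Z₀ ω, Z₁ ω))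
        = condEnt μ Y₀ (fun ω => (C ω, X₀ ω, Z₀ ω))) :
    cmi μ (fun ω => (X₀ ω, X₁ ω)) (fun ω => (Y₀ ω, Y₁ ω)) (fun ω => (C ω, Z₀ ω, Z₁ ω))
      ≤ cmi μ X₀ Y₀ (fun ω => (C ω, Z₀ ω)) + cmi μ X₁ Y₁ Z₁ := by
  have IA := cmi_nonneg μ hμ Y₀ Z₁ (fun ω => (C ω, Z₀ ω))
  have IB := cmi_nonneg μ hμ Y₁ (fun ω => (Y₀ ω, C ω, Z₀ ω)) Z₁
  simp only [cmi, condEnt] at IA IB h1 h2 ⊢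
  have E1 : ent μ (fun ω => ((X₀ ω, X₁ ω), (C ω, Z₀ ω, Z₁ ω)))
      = ent μ (fun ω => (C ω, X₀ ω, X₁ ω, Z₀ ω, Z₁ ω)) :=
    ent_congr μ (fun ω => (C ω, X₀ ω, X₁ ω, Z₀ ω, Z₁ ω))
      (fun ω => ((X₀ ω, X₁ ω), (C ω, Z₀ ω, Z₁ ω)))
      (fun ⟨c, x0, x1, z0, z1⟩ => ((x0, x1), (c, z0, z1)))
      (by rintro ⟨c, x0, x1, z0, z1⟩ ⟨c', x0', x1', z0', z1'⟩ h
          simp only [Prod.mk.injEq] at h ⊢; tauto)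
      (fun ω => rfl)
  have E3 : ent μ (fun ω => ((X₀ ω, X₁ ω), (Y₀ ω, Y₁ ω), (C ω, Z₀ ω, Z₁ ω)))
      = ent μ (fun ω => (Y₁ ω, (C ω, X₀ ω, X₁ ω, Y₀ ω, Z₀ ω, Z₁ ω))) :=
    ent_congr μ (fun ω => (Y₁ ω, (C ω, X₀ ω, X₁ ω, Y₀ ω, Z₀ ω, Z₁ ω)))
      (fun ω => ((X₀ ω, X₁ ω), (Y₀ ω, Y₁ ω), (C ω, Z₀ ω, Z₁ ω)))
      (fun ⟨y1, c, x0, x1, y0, z0, z1⟩ => ((x0, x1), (y0, y1), (c, z0, z1)))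
      (by rintro ⟨y1, c, x0, x1, y0, z0, z1⟩ ⟨y1', c', x0', x1', y0', z0', z1'⟩ h
          simp only [Prod.mk.injEq] at h ⊢; tauto)
      (fun ω => rfl)
  have E4 : ent μ (fun ω => (C ω, X₀ ω, X₁ ω, Y₀ ω, Z₀ ω, Z₁ ω))
      = ent μ (fun ω => (Y₀ ω, (C ω, X₀ ω, X₁ ω, Z₀ ω, Z₁ ω))) :=
    ent_congr μ (fun ω => (Y₀ ω, (C ω, X₀ ω, X₁ ω, Z₀ ω, Z₁ ω)))
      (fun ω => (C ω, X₀ ω, X₁ ω, Y₀ ω, Z₀ ω, Z₁ ω))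
      (fun ⟨y0, c, x0, x1, z0, z1⟩ => (c, x0, x1, y0, z0, z1))
      (by rintro ⟨y0, c, x0, x1, z0, z1⟩ ⟨y0', c', x0', x1', z0', z1'⟩ h
          simp only [Prod.mk.injEq] at h ⊢; tauto)
      (fun ω => rfl)
  have E7 : ent μ (fun ω => (X₀ ω, Y₀ ω, (C ω, Z₀ ω)))
      = ent μ (fun ω => (Y₀ ω, (C ω, X₀ ω, Z₀ ω))) :=
    ent_congr μ (fun ω => (Y₀ ω, (C ω, X₀ ω, Z₀ ω)))
      (fun ω => (X₀ ω, Y₀ ω, (C ω, Z₀ ω)))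
      (fun ⟨y0, c, x0, z0⟩ => (x0, y0, (c, z0)))
      (by rintro ⟨y0, c, x0, z0⟩ ⟨y0', c', x0', z0'⟩ h
          simp only [Prod.mk.injEq] at h ⊢; tauto)
      (fun ω => rfl)
  have E8 : ent μ (fun ω => (X₁ ω, Y₁ ω, Z₁ ω))
      = ent μ (fun ω => (Y₁ ω, (X₁ ω, Z₁ ω))) :=
    ent_congr μ (fun ω => (Y₁ ω, (X₁ ω, Z₁ ω)))
      (fun ω => (X₁ ω, Y₁ ω, Z₁ ω))
      (fun ⟨y1, x1, z1⟩ => (x1, y1, z1))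
      (by rintro ⟨y1, x1, z1⟩ ⟨y1', x1', z1'⟩ h
          simp only [Prod.mk.injEq] at h ⊢; tauto)
      (fun ω => rfl)
  have E9 : ent μ (fun ω => (X₀ ω, (C ω, Z₀ ω)))
      = ent μ (fun ω => (C ω, X₀ ω, Z₀ ω)) :=
    ent_congr μ (fun ω => (C ω, X₀ ω, Z₀ ω))
      (fun ω => (X₀ ω, (C ω, Z₀ ω)))
      (fun ⟨c, x0, z0⟩ => (x0, (c, z0)))
      (by rintro ⟨c, x0, z0⟩ ⟨c', x0', z0'⟩ h
          simp only [Prod.mk.injEq] at h ⊢; tauto)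
      (fun ω => rfl)
  have E5 : ent μ (fun ω => (Z₁ ω, (C ω, Z₀ ω)))
      = ent μ (fun ω => (C ω, Z₀ ω, Z₁ ω)) :=
    ent_congr μ (fun ω => (C ω, Z₀ ω, Z₁ ω))
      (fun ω => (Z₁ ω, (C ω, Z₀ ω)))
      (fun ⟨c, z0, z1⟩ => (z1, (c, z0)))
      (by rintro ⟨c, z0, z1⟩ ⟨c', z0', z1'⟩ h
          simp only [Prod.mk.injEq] at h ⊢; tauto)
      (fun ω => rfl)
  have EB : ent μ (fun ω => ((Y₀ ω, C ω, Z₀ ω), Z₁ ω))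
      = ent μ (fun ω => (Y₀ ω, Z₁ ω, (C ω, Z₀ ω))) :=
    ent_congr μ (fun ω => (Y₀ ω, Z₁ ω, (C ω, Z₀ ω)))
      (fun ω => ((Y₀ ω, C ω, Z₀ ω), Z₁ ω))
      (fun ⟨y0, z1, c, z0⟩ => ((y0, c, z0), z1))
      (by rintro ⟨y0, z1, c, z0⟩ ⟨y0', z1', c', z0'⟩ h
          simp only [Prod.mk.injEq] at h ⊢; tauto)
      (fun ω => rfl)
  have E2 : ent μ (fun ω => (Y₁ ω, (Y₀ ω, C ω, Z₀ ω), Z₁ ω))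
      = ent μ (fun ω => ((Y₀ ω, Y₁ ω), (C ω, Z₀ ω, Z₁ ω))) :=
    ent_congr μ (fun ω => ((Y₀ ω, Y₁ ω), (C ω, Z₀ ω, Z₁ ω)))
      (fun ω => (Y₁ ω, (Y₀ ω, C ω, Z₀ ω), Z₁ ω))
      (fun ⟨⟨y0, y1⟩, c, z0, z1⟩ => (y1, (y0, c, z0), z1))
      (by rintro ⟨⟨y0, y1⟩, c, z0, z1⟩ ⟨⟨y0', y1'⟩, c', z0', z1'⟩ h
          simp only [Prod.mk.injEq] at h ⊢; tauto)
      (fun ω => rfl)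
  linarith [E1, E2, E3, E4, E5, E7, E8, E9, EB, IA, IB, h1, h2]
end
end
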